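/- arXiv:2012.03582 — 6 statements merged into one kernel-verified Lean document; each statement's English description precedes it below -/
import Mathlib

section
/- If (u, v) is a matched edge in a graph G with matching M, then tenacity(u) = tenacity(v) = tenacity(u, v), where tenacity of a vertex w is evenlevel(w) + oddlevel(w) and tenacity of a matched edge (u,v) is oddlevel(u) + oddlevel(v) + 1. -/
open scoped Classical

universe u

variable {V : Type u}

/-- A finite-or-infinite undirected graph together with a matching. -/
structure MatchedGraph (V : Type u) where
  adj : V → V → Prop
  symm : ∀ u v, adj u v → adj v u
  loopless : ∀ v, ¬ adj v v
  M : V → V → Prop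
  M_symm : ∀ u v, M u v → M v u
  M_sub : ∀ u v, M u v → adj u v
  M_matching : ∀ u v w, M u v → M u w → v = w

namespace MatchedGraph

/-- A vertex is unmatched if no matched edge is incident to it. -/
def unmatched (g : MatchedGraph V) (v : V) : Prop := ∀ u, ¬ g.M v u

/-- `p` is a simple alternating path starting at `b` and ending at `v`,
whose first edge is unmatched and whose edges alternate unmatched/matched.
(The `i`-th edge is matched iff `i` is odd.) -/
def AltPath (g : MatchedGraph V) (p : List V) (b v : V) : Prop :=
  p.head? = some b ∧ p.getLast? = some v ∧ p.Nodup ∧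
  ∀ i, i + 1 < p.length →
    g.adj (p.getD i b) (p.getD (i + 1) b) ∧
      (g.M (p.getD i b) (p.getD (i + 1) b) ↔ i % 2 = 1)

/-- An alternating path from an *unmatched* vertex `f` to `v`. -/
def AltPathFrom (g : MatchedGraph V) (p : List V) (f v : V) : Prop :=
  g.unmatched f ∧ g.AltPath p f v

/-- Minimum length of an even alternating path from an unmatched vertex to `v`. -/
noncomputable def evenlevel (g : MatchedGraph V) (v : V) : ℕ∞ :=
  sInf {n : ℕ∞ | ∃ p f, g.AltPathFrom p f v ∧ Even (p.length - 1) ∧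
    n = ((p.length - 1 : ℕ) : ℕ∞)}

/-- Minimum length of an odd alternating path from an unmatched vertex to `v`. -/
noncomputable def oddlevel (g : MatchedGraph V) (v : V) : ℕ∞ :=
  sInf {n : ℕ∞ | ∃ p f, g.AltPathFrom p f v ∧ Odd (p.length - 1) ∧
    n = ((p.length - 1 : ℕ) : ℕ∞)}

noncomputable def tenacity (g : MatchedGraph V) (v : V) : ℕ∞ :=
  g.evenlevel v + g.oddlevel v

noncomputable def minlevel (g : MatchedGraph V) (v : V) : ℕ∞ :=
  min (g.evenlevel v) (g.oddlevel v)

noncomputable def maxlevel (g : MatchedGraph V) (v : V) : ℕ∞ :=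
  max (g.evenlevel v) (g.oddlevel v)

/-- Minimum length of an augmenting path: an alternating path between two
distinct unmatched vertices. -/
noncomputable def lm (g : MatchedGraph V) : ℕ∞ :=
  sInf {n : ℕ∞ | ∃ p f v, g.AltPathFrom p f v ∧ g.unmatched v ∧ f ≠ v ∧
    n = ((p.length - 1 : ℕ) : ℕ∞)}

/-- Minimum tenacity of any vertex. -/
noncomputable def tm (g : MatchedGraph V) : ℕ∞ := ⨅ v, g.tenacity v

/-- `p` is an `evenlevel(v)` path starting at the unmatched vertex `f`. -/
def IsEvenlevelPath (g : MatchedGraph V) (p : List V) (f v : V) : Prop :=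
  g.AltPathFrom p f v ∧ Even (p.length - 1) ∧
    ((p.length - 1 : ℕ) : ℕ∞) = g.evenlevel v

/-- `p` is an `oddlevel(v)` path starting at the unmatched vertex `f`. -/
def IsOddlevelPath (g : MatchedGraph V) (p : List V) (f v : V) : Prop :=
  g.AltPathFrom p f v ∧ Odd (p.length - 1) ∧
    ((p.length - 1 : ℕ) : ℕ∞) = g.oddlevel v

/-- `p` is a `minlevel(v)` path starting at the unmatched vertex `f`. -/
def IsMinlevelPath (g : MatchedGraph V) (p : List V) (f v : V) : Prop :=
  g.AltPathFrom p f v ∧ ((p.length - 1 : ℕ) : ℕ∞) = g.minlevel v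

/-- `p` is a `maxlevel(v)` path starting at the unmatched vertex `f`. -/
def IsMaxlevelPath (g : MatchedGraph V) (p : List V) (f v : V) : Prop :=
  g.AltPathFrom p f v ∧ ((p.length - 1 : ℕ) : ℕ∞) = g.maxlevel v

/-- The vertex at position `i` of `p` (whose prefix from `f` has length `i`)
is BFS-honest w.r.t. `p`. -/
def BFSHonest (g : MatchedGraph V) (p : List V) (f : V) (i : ℕ) : Prop :=
  (Even i → g.evenlevel (p.getD i f) = (i : ℕ∞)) ∧
  (Odd i → g.oddlevel (p.getD i f) = (i : ℕ∞))

/-- `u` is a predecessor of `v`: `(u, v)` is the last edge of some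
`minlevel(v)` path. -/
def IsPred (g : MatchedGraph V) (u v : V) : Prop :=
  ∃ p f, g.IsMinlevelPath p f v ∧ 2 ≤ p.length ∧ p.getD (p.length - 2) f = u

/-- A prop is an edge which is the last edge of a minlevel path to one of its
endpoints. -/
def IsPropEdge (g : MatchedGraph V) (u v : V) : Prop :=
  g.IsPred u v ∨ g.IsPred v u

/-- A bridge is an edge that is not a prop. -/
def IsBridge (g : MatchedGraph V) (u v : V) : Prop :=
  g.adj u v ∧ ¬ g.IsPropEdge u v

/-- Tenacity of an edge. -/
noncomputable def etenacity (g : MatchedGraph V) (u v : V) : ℕ∞ :=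
  if g.M u v then g.oddlevel u + g.oddlevel v + 1
  else g.evenlevel u + g.evenlevel v + 1

/-- The set `B(v)` of all `F(p, v)`: for each `evenlevel(v)` or `oddlevel(v)`
path `p`, the vertex on `p` farthest from the unmatched endpoint among the
vertices of tenacity greater than `tenacity(v)`. -/
def Bset (g : MatchedGraph V) (v : V) : Set V :=
  {b | ∃ p f i, (g.IsEvenlevelPath p f v ∨ g.IsOddlevelPath p f v) ∧
    i < p.length ∧ b = p.getD i f ∧ g.tenacity v < g.tenacity b ∧
    ∀ k, i < k → k < p.length → g.tenacity (p.getD k f) ≤ g.tenacity v}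

/-- `b` is the (unique) base of `v`. -/
def baseOf (g : MatchedGraph V) (v b : V) : Prop := g.Bset v = {b}

/-- Iterated bases: `iterBase k v b` means `b = base^k(v)` (with `base^0(v) = v`). -/
def iterBase (g : MatchedGraph V) : ℕ → V → V → Prop
  | 0, v, b => v = b
  | k + 1, v, b => ∃ u, g.iterBase k v u ∧ g.baseOf u b

/-- A vertex is outer if `evenlevel(v) < oddlevel(v)`. -/
def IsOuter (g : MatchedGraph V) (v : V) : Prop := g.evenlevel v < g.oddlevel v

/-- A vertex is inner if it is not outer. -/
def IsInner (g : MatchedGraph V) (v : V) : Prop := g.oddlevel v ≤ g.evenlevel v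

/-- The set `S_{b,t}` of vertices of tenacity `t` with base `b`. -/
def Sset (g : MatchedGraph V) (t : ℕ) (b : V) : Set V :=
  {v | g.tenacity v = (t : ℕ∞) ∧ g.baseOf v b}

/-- The blossom `B_{b,t}`, defined recursively. -/
def blossom (g : MatchedGraph V) : ℕ → V → Set V
  | 0, _ => ∅
  | 1, _ => ∅
  | t + 2, b => g.Sset (t + 2) b ∪
      ⋃ v ∈ {v | (v ∈ g.Sset (t + 2) b ∨ v = b) ∧ g.IsOuter v}, blossom g t v

/-- The nesting depth `N(B_{b,t})` of a blossom. -/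
noncomputable def ndepth (g : MatchedGraph V) [Fintype V] : ℕ → V → ℕ
  | 0, _ => 0
  | 1, _ => 0
  | t + 2, b =>
    if (g.Sset (t + 2) b).Nonempty then
      1 + Finset.univ.sup (fun v =>
        if (v ∈ g.Sset (t + 2) b ∨ v = b) ∧ g.IsOuter v then ndepth g t v else 0)
    else ndepth g t b

/-- `evenlevel(b; v)`: minimum even length of an alternating path from `b` to
`v` starting with an unmatched edge. -/
noncomputable def evenlevelFrom (g : MatchedGraph V) (b v : V) : ℕ∞ :=
  sInf {n : ℕ∞ | ∃ p, g.AltPath p b v ∧ Even (p.length - 1) ∧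
    n = ((p.length - 1 : ℕ) : ℕ∞)}

/-- `oddlevel(b; v)`: minimum odd length of an alternating path from `b` to
`v` starting with an unmatched edge. -/
noncomputable def oddlevelFrom (g : MatchedGraph V) (b v : V) : ℕ∞ :=
  sInf {n : ℕ∞ | ∃ p, g.AltPath p b v ∧ Odd (p.length - 1) ∧
    n = ((p.length - 1 : ℕ) : ℕ∞)}

end MatchedGraph



namespace MatchedGraph

variable {g : MatchedGraph V} {p : List V} {f v u w : V}

lemma ne_of_M (h : g.M u v) : u ≠ v :=
  fun e => g.loopless v (g.M_sub v v (e ▸ h))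

lemma AltPath.length_pos (h : g.AltPath p f v) : 0 < p.length := by
  rcases h with ⟨h1, -⟩
  cases p <;> simp_all

lemma AltPath.ne_nil (h : g.AltPath p f v) : p ≠ [] :=
  List.length_pos_iff.1 h.length_pos

lemma AltPath.getD_zero (h : g.AltPath p f v) : p.getD 0 f = f := by
  rcases h with ⟨h1, -⟩
  cases p <;> simp_all

lemma AltPath.getD_last (h : g.AltPath p f v) : p.getD (p.length - 1) f = v := by
  have hne := h.ne_nil
  rcases h with ⟨-, h2, -⟩
  rw [List.getLast?_eq_getLast hne] at h2
  have h2' : p.getLast hne = v := Option.some_injective _ h2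
  rw [List.getLast_eq_getElem hne] at h2'
  rw [List.getD_eq_getElem p f (Nat.sub_lt (List.length_pos_iff.2 hne) one_pos)]
  exact h2'

lemma AltPath.take (h : g.AltPath p f v) {j : ℕ} (hj : j < p.length) :
    g.AltPath (p.take (j + 1)) f (p.getD j f) := by
  obtain ⟨h1, h2, h3, h4⟩ := h
  have hlen : (p.take (j + 1)).length = j + 1 := by
    rw [List.length_take]; omega
  have hget : ∀ i, i < j + 1 → (p.take (j + 1)).getD i f = p.getD i f := by
    intro i hi
    rw [List.getD_eq_getElem _ f (by omega), List.getD_eq_getElem p f (by omega)]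
    exact List.getElem_take
  refine ⟨?_, ?_, h3.sublist (List.take_sublist _ _), ?_⟩
  · cases p with
    | nil => simp at h1
    | cons a l => simpa using h1
  · have hne : p.take (j + 1) ≠ [] := by
      intro hcon; rw [hcon] at hlen; simp at hlen
    rw [List.getLast?_eq_getLast hne]
    congr 1
    rw [List.getLast_eq_getElem hne]
    have := hget ((p.take (j + 1)).length - 1) (by omega)
    rw [List.getD_eq_getElem _ f (by omega)] at this
    rw [this, hlen]
    simp
  · intro i hi
    rw [hlen] at hi
    rw [hget i (by omega), hget (i + 1) (by omega)]
    exact h4 i (by omega)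

lemma AltPath.append (h : g.AltPath p f w) (hu : u ∉ p) (hadj : g.adj w u)
    (hm : g.M w u ↔ (p.length - 1) % 2 = 1) : g.AltPath (p ++ [u]) f u := by
  have hpos := h.length_pos
  have hlast := h.getD_last
  obtain ⟨h1, h2, h3, h4⟩ := h
  have hget : ∀ i, i < p.length → (p ++ [u]).getD i f = p.getD i f := by
    intro i hi
    rw [List.getD_eq_getElem _ f (by simp; omega), List.getD_eq_getElem p f hi]
    exact List.getElem_append_left hi
  have hgetu : (p ++ [u]).getD p.length f = u := by
    rw [List.getD_eq_getElem _ f (by simp)]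
    simp
  refine ⟨?_, ?_, ?_, ?_⟩
  · cases p with
    | nil => simp at hpos
    | cons a l => simpa using h1
  · exact List.getLast?_concat
  · rw [List.nodup_append]
    exact ⟨h3, List.nodup_singleton u, fun a ha b hb hab => hu (by simp at hb; rw [← hb, ← hab]; exact ha)⟩
  · intro i hi
    simp only [List.length_append, List.length_singleton] at hi
    rcases Nat.lt_or_ge (i + 1) p.length with hlt | hge
    · rw [hget i (by omega), hget (i + 1) hlt]
      exact h4 i hlt
    · have hieq : i + 1 = p.length := by omega
      have hi' : i = p.length - 1 := by omega
      rw [hget i (by omega), hieq, hgetu, hi', hlast]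
      exact ⟨hadj, hm⟩

lemma oddlevel_le_of_path (h : g.AltPathFrom p f v) (ho : Odd (p.length - 1)) :
    g.oddlevel v ≤ ((p.length - 1 : ℕ) : ℕ∞) :=
  sInf_le ⟨p, f, h, ho, rfl⟩

lemma evenlevel_le_of_path (h : g.AltPathFrom p f v) (ho : Even (p.length - 1)) :
    g.evenlevel v ≤ ((p.length - 1 : ℕ) : ℕ∞) :=
  sInf_le ⟨p, f, h, ho, rfl⟩

lemma getElem_nodup_inj {i j : ℕ} (h3 : p.Nodup) (hi : i < p.length)
    (hj : j < p.length) (he : p[i] = p[j]) : i = j :=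
  (h3.getElem_inj_iff).1 he

/-- Key step: from an odd path to `v`, produce an even path to `u` of length
at most one more, when `M u v`. -/
lemma evenlevel_le_oddlevel_add_one (h : g.M u v) :
    g.evenlevel u ≤ g.oddlevel v + 1 := by
  by_cases hne : {n : ℕ∞ | ∃ p f, g.AltPathFrom p f v ∧ Odd (p.length - 1) ∧
      n = ((p.length - 1 : ℕ) : ℕ∞)}.Nonempty
  · obtain ⟨q, f, ⟨hf, hq⟩, hodd, hval⟩ := csInf_mem hne
    set m := q.length - 1 with hm
    have hpos := hq.length_pos
    have hlen : q.length = m + 1 := by omega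
    have hlastq : q.getD m f = v := by
      have := hq.getD_last; rwa [← hm] at this
    have hlevel : g.oddlevel v = ((m : ℕ) : ℕ∞) := hval
    by_cases hu : u ∈ q
    · -- u occurs on q; it must be the second-to-last vertex
      obtain ⟨i, hi, hiu⟩ := List.getElem_of_mem hu
      have hgi : q.getD i f = u := by
        rw [List.getD_eq_getElem q f hi, hiu]
      have hne0 : i ≠ 0 := by
        intro h0
        have : u = f := by rw [← hgi, h0, hq.getD_zero]
        exact hf v (this ▸ h)
      have hnem : i ≠ m := by
        intro h0
        exact ne_of_M h (by rw [← hgi, h0, hlastq])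
      have him : i < m := by omega
      rcases Nat.even_or_odd i with hev | hod
      · -- i even, i ≥ 2; edge (i-1, i) is matched, forcing q[i-1] = v, contradiction
        exfalso
        have hi2 : 2 ≤ i := by
          rcases hev with ⟨k, hk⟩; omega
        have hedge := (hq.2.2.2 (i - 1) (by omega)).2
        have : (i - 1) % 2 = 1 := by
          rcases hev with ⟨k, hk⟩; omega
        have hM : g.M (q.getD (i - 1) f) (q.getD (i - 1 + 1) f) := hedge.2 this
        rw [show i - 1 + 1 = i from by omega, hgi] at hM
        have hveq : q.getD (i - 1) f = v :=
          (g.M_matching u v _ h (g.M_symm _ _ hM)).symm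
        rw [List.getD_eq_getElem q f (by omega)] at hveq
        have hvm : q[m]'(by omega) = v := by
          rw [← List.getD_eq_getElem q f (by omega), hlastq]
        have : i - 1 = m := getElem_nodup_inj hq.2.2.1 (by omega) (by omega)
          (hveq.trans hvm.symm)
        omega
      · -- i odd; edge (i, i+1) matched, so q[i+1] = v, so i + 1 = m
        have hedge := (hq.2.2.2 i (by omega)).2
        have hM : g.M (q.getD i f) (q.getD (i + 1) f) := hedge.2 (by
          rcases hod with ⟨k, hk⟩; omega)
        rw [hgi] at hM
        have hveq : q.getD (i + 1) f = v := (g.M_matching u v _ h hM).symm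
        rw [List.getD_eq_getElem q f (by omega)] at hveq
        have hvm : q[m]'(by omega) = v := by
          rw [← List.getD_eq_getElem q f (by omega), hlastq]
        have him' : i + 1 = m := getElem_nodup_inj hq.2.2.1 (by omega) (by omega)
          (hveq.trans hvm.symm)
        -- take the prefix of q up to index i : even path to u of length i = m - 1
        have htake := hq.take (j := i) (by omega)
        rw [hgi] at htake
        have hlt : g.evenlevel u ≤ ((i : ℕ) : ℕ∞) := by
          have := evenlevel_le_of_path (v := u) ⟨hf, htake⟩ (by
            rw [List.length_take]
            have : min (i + 1) q.length = i + 1 := by omega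
            rw [this, Nat.add_sub_cancel]
            rcases hodd with ⟨k, hk⟩
            exact ⟨k, by omega⟩)
          rwa [List.length_take, show min (i + 1) q.length = i + 1 from by omega,
            Nat.add_sub_cancel] at this
        calc g.evenlevel u ≤ ((i : ℕ) : ℕ∞) := hlt
          _ ≤ ((m : ℕ) : ℕ∞) + 1 := by
              rw [← Nat.cast_one, ← Nat.cast_add, Nat.cast_le]; omega
          _ = g.oddlevel v + 1 := by rw [hlevel]
    · -- u not on q : extend q by the matched edge (v, u)
      have happ := hq.append hu (g.M_sub _ _ (g.M_symm _ _ h))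
        (by constructor
            · intro _; rcases hodd with ⟨k, hk⟩; omega
            · intro _; exact g.M_symm _ _ h)
      have hlt := evenlevel_le_of_path (v := u) ⟨hf, happ⟩ (by
        simp only [List.length_append, List.length_singleton]
        rcases hodd with ⟨k, hk⟩
        exact ⟨k + 1, by omega⟩)
      simp only [List.length_append, List.length_singleton] at hlt
      calc g.evenlevel u ≤ ((q.length + 1 - 1 : ℕ) : ℕ∞) := hlt
        _ = ((m : ℕ) : ℕ∞) + 1 := by
            norm_cast
        _ = g.oddlevel v + 1 := by rw [hlevel]
  · have : g.oddlevel v = ⊤ := by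
      rw [oddlevel, Set.not_nonempty_iff_eq_empty.1 hne, sInf_empty]
    rw [this]
    simp

lemma oddlevel_add_one_le_evenlevel (h : g.M u v) :
    g.oddlevel v + 1 ≤ g.evenlevel u := by
  rw [evenlevel]
  apply le_sInf
  rintro n ⟨q, f, ⟨hf, hq⟩, heven, rfl⟩
  set m := q.length - 1 with hm
  have hpos := hq.length_pos
  have hlastq : q.getD m f = u := by
    have := hq.getD_last; rwa [← hm] at this
  have hm0 : m ≠ 0 := by
    intro h0
    have : u = f := by
      rw [← hlastq, h0, hq.getD_zero]
    exact hf v (this ▸ h)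
  have hm2 : 2 ≤ m := by
    rcases heven with ⟨k, hk⟩; omega
  -- last edge is matched : M q[m-1] u, so q[m-1] = v
  have hedge := (hq.2.2.2 (m - 1) (by omega)).2
  have hM : g.M (q.getD (m - 1) f) (q.getD (m - 1 + 1) f) := hedge.2 (by
    rcases heven with ⟨k, hk⟩; omega)
  rw [show m - 1 + 1 = m from by omega, hlastq] at hM
  have hveq : q.getD (m - 1) f = v := (g.M_matching u v _ h (g.M_symm _ _ hM)).symm
  have htake := hq.take (j := m - 1) (by omega)
  rw [hveq] at htake
  have hlt := oddlevel_le_of_path (v := v) ⟨hf, htake⟩ (by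
    rw [List.length_take, show min (m - 1 + 1) q.length = m - 1 + 1 from by omega,
      Nat.add_sub_cancel]
    rcases heven with ⟨k, hk⟩
    exact ⟨k - 1, by omega⟩)
  rw [List.length_take, show min (m - 1 + 1) q.length = m - 1 + 1 from by omega,
    Nat.add_sub_cancel] at hlt
  calc g.oddlevel v + 1 ≤ ((m - 1 : ℕ) : ℕ∞) + 1 := by
        exact add_le_add hlt le_rfl
    _ = ((m : ℕ) : ℕ∞) := by
        norm_cast; omega

lemma evenlevel_eq_oddlevel_add_one (h : g.M u v) :
    g.evenlevel u = g.oddlevel v + 1 :=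
  le_antisymm (evenlevel_le_oddlevel_add_one h) (oddlevel_add_one_le_evenlevel h)

end MatchedGraph

/-- If `(u, v)` is a matched edge then
`tenacity(u) = tenacity(v) = tenacity(u, v)`. -/
theorem tenacity_eq_of_matched (g : MatchedGraph V) (u v : V) (h : g.M u v) :
    g.tenacity u = g.tenacity v ∧ g.tenacity v = g.etenacity u v := by
  have h1 : g.evenlevel u = g.oddlevel v + 1 :=
    MatchedGraph.evenlevel_eq_oddlevel_add_one h
  have h2 : g.evenlevel v = g.oddlevel u + 1 :=
    MatchedGraph.evenlevel_eq_oddlevel_add_one (g.M_symm _ _ h)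
  constructor
  · rw [MatchedGraph.tenacity, MatchedGraph.tenacity, h1, h2]
    ring
  · rw [MatchedGraph.tenacity, MatchedGraph.etenacity, if_pos h, h2]
    ring
end

section
/- If (u, v) is a matched edge, then evenlevel(v) = oddlevel(u) + 1 and evenlevel(u) = oddlevel(v) + 1. -/
open scoped Classical

universe u

variable {V : Type u}

section AuxKey

variable {V : Type u}

private lemma aux_key (g : MatchedGraph V) (u v : V) (h : g.M u v) :
    g.evenlevel v = g.oddlevel u + 1 := by
  classical
  have hvu : g.M v u := g.M_symm u v h
  have huv : u ≠ v := by
    intro e; subst e; exact g.loopless u (g.M_sub u u h)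
  apply le_antisymm
  · -- evenlevel v ≤ oddlevel u + 1
    rcases Set.eq_empty_or_nonempty
        {n : ℕ∞ | ∃ p f, g.AltPathFrom p f u ∧ Odd (p.length - 1) ∧
          n = ((p.length - 1 : ℕ) : ℕ∞)} with he | hne
    · rw [MatchedGraph.oddlevel, he, sInf_empty]
      simp
    · have hm := csInf_mem hne
      obtain ⟨p, f, ⟨hf, hhead, hlast, hnd, hedge⟩, hodd, hn⟩ := hm
      have hpne : p ≠ [] := by intro e; simp [e] at hhead
      have hL1 : 1 ≤ p.length := List.length_pos_iff.2 hpne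
      have hodd' : (p.length - 1) % 2 = 1 := Nat.odd_iff.mp hodd
      have hL : p.length % 2 = 0 ∧ 2 ≤ p.length := by omega
      have E : ∀ i, (hi : i + 1 < p.length) →
          g.adj (p[i]'(by omega)) (p[i+1]'hi) ∧
          (g.M (p[i]'(by omega)) (p[i+1]'hi) ↔ i % 2 = 1) := by
        intro i hi
        have := hedge i hi
        rwa [List.getD_eq_getElem p f (by omega), List.getD_eq_getElem p f hi] at this
      have hf0 : p[0]'(by omega) = f := by
        rw [List.head?_eq_getElem?, List.getElem?_eq_getElem (by omega : 0 < p.length)] at hhead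
        exact Option.some_injective _ hhead
      have hu : p[p.length - 1]'(by omega) = u := by
        rw [List.getLast?_eq_getElem?,
          List.getElem?_eq_getElem (by omega : p.length - 1 < p.length)] at hlast
        exact Option.some_injective _ hlast
      -- v is not on p
      have hvp : v ∉ p := by
        rw [List.mem_iff_getElem]
        rintro ⟨j, hj, hje⟩
        rcases Nat.eq_zero_or_pos j with hj0 | hj0
        · subst hj0
          exact hf u (hf0 ▸ hje ▸ hvu)
        · rcases Nat.even_or_odd j with hje2 | hjo
          · have hje2' : j % 2 = 0 := Nat.even_iff.mp hje2
            have hj1 : j - 1 + 1 = j := by omega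
            obtain ⟨-, hM⟩ := E (j-1) (by omega)
            simp only [hj1] at hM
            rw [hje] at hM
            have hMu : g.M (p[j-1]'(by omega)) v := hM.mpr (by omega)
            have : p[j-1]'(by omega) = u :=
              g.M_matching v _ u (g.M_symm _ _ hMu) hvu
            rw [← hu] at this
            have := hnd.getElem_inj_iff.mp this
            omega
          · have hjo' : j % 2 = 1 := Nat.odd_iff.mp hjo
            by_cases hjL : j = p.length - 1
            · subst hjL
              exact huv (hu ▸ hje ▸ rfl)
            · have hj2 : j + 1 < p.length := by omega
              obtain ⟨-, hM⟩ := E j hj2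
              rw [hje] at hM
              have hMu : g.M v (p[j+1]'hj2) := hM.mpr hjo'
              have : p[j+1]'hj2 = u := g.M_matching v _ u hMu hvu
              rw [← hu] at this
              have := hnd.getElem_inj_iff.mp this
              omega
      -- the extended path
      have hqlen : (p ++ [v]).length = p.length + 1 := by simp
      have hq1 : ∀ k, (hk : k < p.length) → (p ++ [v]).getD k f = p[k] := by
        intro k hk
        rw [List.getD_eq_getElem _ f (by simp; omega), List.getElem_append_left hk]
      have hq2 : (p ++ [v]).getD p.length f = v := by
        rw [List.getD_eq_getElem _ f (by simp),
          List.getElem_append_right (le_refl p.length)]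
        simp
      have hmem : (((p ++ [v]).length - 1 : ℕ) : ℕ∞) ∈
          {n : ℕ∞ | ∃ q f, g.AltPathFrom q f v ∧ Even (q.length - 1) ∧
            n = ((q.length - 1 : ℕ) : ℕ∞)} := by
        refine ⟨p ++ [v], f, ⟨hf, ?_, ?_, ?_, ?_⟩, ?_, rfl⟩
        · cases p with
          | nil => exact absurd rfl hpne
          | cons a t => simpa using hhead
        · exact List.getLast?_concat
        · simp [List.nodup_append, hnd, hvp]; exact fun a ha e => hvp (e ▸ ha)
        · intro i hi
          rw [hqlen] at hi
          by_cases hiL : i + 1 < p.length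
          · rw [hq1 i (by omega), hq1 (i+1) hiL]
            exact E i hiL
          · have hieq : i = p.length - 1 := by omega
            subst hieq
            have h2 : p.length - 1 + 1 = p.length := by omega
            rw [hq1 _ (by omega)]
            simp only [h2]
            rw [hq2, hu]
            exact ⟨g.M_sub u v h, ⟨fun _ => by omega, fun _ => h⟩⟩
        · rw [hqlen]
          simp only [Nat.add_sub_cancel]
          exact Nat.even_iff.mpr (by omega)
      have hle := sInf_le hmem
      rw [MatchedGraph.oddlevel, hn]
      have harith : ((p.length - 1 : ℕ) : ℕ∞) + 1 = (((p ++ [v]).length - 1 : ℕ) : ℕ∞) := by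
        rw [hqlen]
        rw [show p.length + 1 - 1 = (p.length - 1) + 1 by omega]
        push_cast
        ring
      rw [harith]
      exact hle
  · -- oddlevel u + 1 ≤ evenlevel v
    rw [MatchedGraph.evenlevel]
    apply le_sInf
    rintro m ⟨q, f, ⟨hf, hhead, hlast, hnd, hedge⟩, heven, rfl⟩
    have hqne : q ≠ [] := by intro e; simp [e] at hhead
    have hL1 : 1 ≤ q.length := List.length_pos_iff.2 hqne
    have heven' : (q.length - 1) % 2 = 0 := Nat.even_iff.mp heven
    have E : ∀ i, (hi : i + 1 < q.length) →
        g.adj (q[i]'(by omega)) (q[i+1]'hi) ∧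
        (g.M (q[i]'(by omega)) (q[i+1]'hi) ↔ i % 2 = 1) := by
      intro i hi
      have := hedge i hi
      rwa [List.getD_eq_getElem q f (by omega), List.getD_eq_getElem q f hi] at this
    have hf0 : q[0]'(by omega) = f := by
      rw [List.head?_eq_getElem?, List.getElem?_eq_getElem (by omega : 0 < q.length)] at hhead
      exact Option.some_injective _ hhead
    have hv : q[q.length - 1]'(by omega) = v := by
      rw [List.getLast?_eq_getElem?,
        List.getElem?_eq_getElem (by omega : q.length - 1 < q.length)] at hlast
      exact Option.some_injective _ hlast
    have hL2 : 2 ≤ q.length := by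
      by_contra hc
      have hq1 : q.length = 1 := by omega
      have : f = v := by
        simp only [hq1] at hv
        rw [← hf0, ← hv]
      exact hf u (this ▸ hvu)
    have hL3 : 3 ≤ q.length ∧ q.length % 2 = 1 := by omega
    -- last edge is matched, so q[L-2] = u
    have hedgeL : q.length - 2 + 1 = q.length - 1 := by omega
    obtain ⟨-, hM⟩ := E (q.length - 2) (by omega)
    simp only [hedgeL] at hM
    rw [hv] at hM
    have hMu : g.M (q[q.length - 2]'(by omega)) v := hM.mpr (by omega)
    have hqu : q[q.length - 2]'(by omega) = u :=
      g.M_matching v _ u (g.M_symm _ _ hMu) hvu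
    -- truncated path
    have hq'len : (q.take (q.length - 1)).length = q.length - 1 := by
      rw [List.length_take]; omega
    have hq'el : ∀ k, (hk : k < q.length - 1) →
        (q.take (q.length - 1))[k]'(by omega) = q[k]'(by omega) :=
      fun k hk => List.getElem_take ..
    have hq'getD : ∀ k, (hk : k < q.length - 1) →
        (q.take (q.length - 1)).getD k f = q[k]'(by omega) := by
      intro k hk
      rw [List.getD_eq_getElem _ f (by omega), hq'el k hk]
    have hmem : (((q.take (q.length - 1)).length - 1 : ℕ) : ℕ∞) ∈
        {n : ℕ∞ | ∃ p f, g.AltPathFrom p f u ∧ Odd (p.length - 1) ∧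
          n = ((p.length - 1 : ℕ) : ℕ∞)} := by
      refine ⟨q.take (q.length - 1), f, ⟨hf, ?_, ?_, ?_, ?_⟩, ?_, rfl⟩
      · rw [List.head?_eq_getElem?, List.getElem?_eq_getElem (by omega : 0 < _),
          hq'el 0 (by omega), hf0]
      · rw [List.getLast?_eq_getElem?, hq'len,
          List.getElem?_eq_getElem (by omega : q.length - 1 - 1 < _),
          hq'el _ (by omega)]
        simp only [show q.length - 1 - 1 = q.length - 2 from by omega, hqu]
      · exact (List.take_sublist _ _).nodup hnd
      · intro i hi
        rw [hq'len] at hi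
        rw [hq'getD i (by omega), hq'getD (i+1) hi]
        exact E i (by omega)
      · rw [hq'len]
        exact Nat.odd_iff.mpr (by omega)
    have hle := sInf_le hmem
    rw [MatchedGraph.oddlevel]
    calc sInf _ + 1 ≤ (((q.take (q.length - 1)).length - 1 : ℕ) : ℕ∞) + 1 :=
          add_le_add hle le_rfl
      _ = ((q.length - 1 : ℕ) : ℕ∞) := by
          rw [hq'len]
          exact_mod_cast congrArg (Nat.cast : ℕ → ℕ∞)
            (by omega : (q.length - 1 - 1) + 1 = q.length - 1)

end AuxKey

/-- If `(u, v)` is a matched edge, then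
`evenlevel(v) = oddlevel(u) + 1` and `evenlevel(u) = oddlevel(v) + 1`. -/
theorem evenlevel_eq_oddlevel_add_one_of_matched (g : MatchedGraph V) (u v : V)
    (h : g.M u v) :
    g.evenlevel v = g.oddlevel u + 1 ∧ g.evenlevel u = g.oddlevel v + 1 :=
  ⟨aux_key g u v h, aux_key g v u (g.M_symm u v h)⟩
end

section
/- Let p be an evenlevel(v) or oddlevel(v) path, and let u lie on p with tenacity(u) > tenacity(v). Then the length of the prefix p[f to u] equals minlevel(u), the smaller of evenlevel(u) and oddlevel(u). -/
open scoped Classical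

universe u

variable {V : Type u}

namespace MGAux

/-- A path given by an indexing function. -/
def chain (φ : ℕ → V) (n : ℕ) : List V := (List.range (n+1)).map φ

lemma chain_length (φ : ℕ → V) (n : ℕ) : (chain φ n).length = n + 1 := by
  simp [chain]

lemma chain_getD (φ : ℕ → V) (n t : ℕ) (d : V) (h : t ≤ n) :
    (chain φ n).getD t d = φ t := by
  rw [List.getD_eq_getElem _ _ (by rw [chain_length]; omega)]
  simp [chain]

lemma chain_head? (φ : ℕ → V) (n : ℕ) : (chain φ n).head? = some (φ 0) := by
  have h : (chain φ n) ≠ [] := by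
    intro h; have := chain_length φ n; rw [h] at this; simp at this
  rw [List.head?_eq_head h]
  have : (chain φ n).head h = (chain φ n)[0]'(by rw [chain_length]; omega) := by
    simp [List.getElem_zero]
  rw [this]; simp [chain]

lemma chain_getLast? (φ : ℕ → V) (n : ℕ) : (chain φ n).getLast? = some (φ n) := by
  rw [List.getLast?_eq_getElem?]
  rw [chain_length]
  simp only [Nat.add_sub_cancel]
  rw [List.getElem?_eq_getElem (by rw [chain_length]; omega)]
  simp [chain]

lemma chain_nodup (φ : ℕ → V) (n : ℕ)
    (hinj : ∀ a ≤ n, ∀ b ≤ n, φ a = φ b → a = b) : (chain φ n).Nodup := by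
  refine List.Nodup.map_on ?_ List.nodup_range
  intro a ha b hb h
  exact hinj a (by simpa using Nat.lt_succ_iff.mp (List.mem_range.mp ha))
    b (by simpa using Nat.lt_succ_iff.mp (List.mem_range.mp hb)) h

/-- getD is independent of the default for in-range indices. -/
lemma getD_indep (l : List V) (t : ℕ) (d d' : V) (h : t < l.length) :
    l.getD t d = l.getD t d' := by
  rw [List.getD_eq_getElem _ _ h, List.getD_eq_getElem _ _ h]

lemma getD_zero (l : List V) (b d : V) (h : l.head? = some b) : l.getD 0 d = b := by
  cases l with
  | nil => simp at h
  | cons a l => simp at h; simp [h]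

lemma getD_last (l : List V) (v d : V) (h : l.getLast? = some v) :
    l.getD (l.length - 1) d = v := by
  cases l with
  | nil => simp at h
  | cons a l =>
    rw [List.getLast?_eq_getElem?] at h
    rw [List.getD_eq_getElem _ _ (by simp)]
    rw [List.getElem?_eq_getElem (by simp)] at h
    simpa using h

lemma nodup_inj (l : List V) (h : l.Nodup) (a b : ℕ) (d : V)
    (ha : a < l.length) (hb : b < l.length) (he : l.getD a d = l.getD b d) : a = b := by
  rw [List.getD_eq_getElem _ _ ha, List.getD_eq_getElem _ _ hb] at he
  exact h.getElem_inj_iff.mp he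

/-- Build an AltPath from a chain. -/
lemma altPath_chain (g : MatchedGraph V) (φ : ℕ → V) (n : ℕ)
    (hinj : ∀ a ≤ n, ∀ b ≤ n, φ a = φ b → a = b)
    (hedge : ∀ t < n, g.adj (φ t) (φ (t+1)) ∧ (g.M (φ t) (φ (t+1)) ↔ t % 2 = 1)) :
    g.AltPath (chain φ n) (φ 0) (φ n) := by
  refine ⟨chain_head? φ n, chain_getLast? φ n, chain_nodup φ n hinj, ?_⟩
  intro t ht
  rw [chain_length] at ht
  rw [chain_getD φ n t _ (by omega), chain_getD φ n (t+1) _ (by omega)]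
  exact hedge t (by omega)

section Levels

variable (g : MatchedGraph V)

lemma evenlevel_le {r : List V} {x u : V} (h : g.AltPathFrom r x u)
    (he : (r.length - 1) % 2 = 0) : g.evenlevel u ≤ ((r.length - 1 : ℕ) : ℕ∞) :=
  sInf_le ⟨r, x, h, Nat.even_iff.mpr he, rfl⟩

lemma oddlevel_le {r : List V} {x u : V} (h : g.AltPathFrom r x u)
    (he : (r.length - 1) % 2 = 1) : g.oddlevel u ≤ ((r.length - 1 : ℕ) : ℕ∞) :=
  sInf_le ⟨r, x, h, Nat.odd_iff.mpr he, rfl⟩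

lemma minlevel_le {r : List V} {x u : V} (h : g.AltPathFrom r x u) :
    g.minlevel u ≤ ((r.length - 1 : ℕ) : ℕ∞) := by
  rcases Nat.even_or_odd (r.length - 1) with he | ho
  · exact le_trans (min_le_left _ _) (evenlevel_le g h (Nat.even_iff.mp he))
  · exact le_trans (min_le_right _ _) (oddlevel_le g h (Nat.odd_iff.mp ho))

lemma evenlevel_attained {u : V} {n : ℕ} (h : g.evenlevel u = (n : ℕ∞)) :
    ∃ r x, g.AltPathFrom r x u ∧ r.length - 1 = n ∧ n % 2 = 0 := by
  by_contra hc
  push_neg at hc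
  have hmem : ((n : ℕ∞)) ∉ {m : ℕ∞ | ∃ p f, g.AltPathFrom p f u ∧ Even (p.length - 1) ∧
      m = ((p.length - 1 : ℕ) : ℕ∞)} := by
    rintro ⟨r, x, hr, hev, heq⟩
    have hlen : r.length - 1 = n := by exact_mod_cast heq.symm
    exact (hc r x hr hlen) (by rw [← hlen]; exact Nat.even_iff.mp hev)
  have hge : ∀ m ∈ {m : ℕ∞ | ∃ p f, g.AltPathFrom p f u ∧ Even (p.length - 1) ∧
      m = ((p.length - 1 : ℕ) : ℕ∞)}, ((n : ℕ∞)) + 1 ≤ m := by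
    intro m hm
    have h1 : ((n : ℕ∞)) ≤ m := h ▸ sInf_le hm
    have h2 : ((n : ℕ∞)) ≠ m := fun he => hmem (he ▸ hm)
    exact ENat.add_one_le_iff (by simp) |>.mpr (lt_of_le_of_ne h1 h2)
  have : ((n : ℕ∞)) + 1 ≤ g.evenlevel u := le_sInf hge
  rw [h] at this
  have : (n : ℕ∞) < (n : ℕ∞) := lt_of_lt_of_le (by exact_mod_cast Nat.lt_succ_self n) this
  exact absurd this (lt_irrefl _)

lemma oddlevel_attained {u : V} {n : ℕ} (h : g.oddlevel u = (n : ℕ∞)) :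
    ∃ r x, g.AltPathFrom r x u ∧ r.length - 1 = n ∧ n % 2 = 1 := by
  by_contra hc
  push_neg at hc
  have hmem : ((n : ℕ∞)) ∉ {m : ℕ∞ | ∃ p f, g.AltPathFrom p f u ∧ Odd (p.length - 1) ∧
      m = ((p.length - 1 : ℕ) : ℕ∞)} := by
    rintro ⟨r, x, hr, hev, heq⟩
    have hlen : r.length - 1 = n := by exact_mod_cast heq.symm
    exact (hc r x hr hlen) (by rw [← hlen]; exact Nat.odd_iff.mp hev)
  have hge : ∀ m ∈ {m : ℕ∞ | ∃ p f, g.AltPathFrom p f u ∧ Odd (p.length - 1) ∧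
      m = ((p.length - 1 : ℕ) : ℕ∞)}, ((n : ℕ∞)) + 1 ≤ m := by
    intro m hm
    have h1 : ((n : ℕ∞)) ≤ m := h ▸ sInf_le hm
    have h2 : ((n : ℕ∞)) ≠ m := fun he => hmem (he ▸ hm)
    exact ENat.add_one_le_iff (by simp) |>.mpr (lt_of_le_of_ne h1 h2)
  have : ((n : ℕ∞)) + 1 ≤ g.oddlevel u := le_sInf hge
  rw [h] at this
  have : (n : ℕ∞) < (n : ℕ∞) := lt_of_lt_of_le (by exact_mod_cast Nat.lt_succ_self n) this
  exact absurd this (lt_irrefl _)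

end Levels

end MGAux
namespace MGAux

variable {g : MatchedGraph V}

lemma scan (g : MatchedGraph V) (p : List V) (f v : V)
    (hp : g.AltPath p f v) (L i : ℕ) (hL : p.length = L + 1) (hiL : i ≤ L)
    (c : List V) (x y : V) (hc : g.AltPathFrom c x y) (N : ℕ) (hN : c.length = N + 1)
    (t0 : ℕ) (ht0i : i ≤ t0) (ht0L : t0 ≤ L) (hyt : y = p.getD t0 f) :
    ∃ m k, m ≤ N ∧ i ≤ k ∧ k ≤ L ∧ c.getD m x = p.getD k f ∧
      ((k % 2 = m % 2 ∧ ∃ r z, g.AltPathFrom r z v ∧ r.length = m + (L - k) + 1) ∨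
       (k % 2 ≠ m % 2 ∧ ∃ r z, g.AltPathFrom r z (p.getD i f) ∧
          r.length = m + (k - i) + 1)) := by
  obtain ⟨hxun, hchead, hclast, hcnodup, hcedge⟩ :
      g.unmatched x ∧ c.head? = some x ∧ c.getLast? = some y ∧ c.Nodup ∧
        ∀ a, a + 1 < c.length → g.adj (c.getD a x) (c.getD (a+1) x) ∧
          (g.M (c.getD a x) (c.getD (a+1) x) ↔ a % 2 = 1) :=
    ⟨hc.1, hc.2.1, hc.2.2.1, hc.2.2.2.1, hc.2.2.2.2⟩
  obtain ⟨hphead, hplast, hpnodup, hpedge⟩ := hp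
  have hcN : c.getD N x = y := by
    have := getD_last c y x hclast
    rwa [hN, Nat.add_sub_cancel] at this
  have hc0 : c.getD 0 x = x := getD_zero c x x hchead
  -- the "first hit" predicate
  set P : ℕ → Prop := fun n => ∃ k, i ≤ k ∧ k ≤ L ∧ c.getD n x = p.getD k f with hP
  have hPN : P N := ⟨t0, ht0i, ht0L, by rw [hcN, hyt]⟩
  have hex : ∃ n, P n := ⟨N, hPN⟩
  classical
  set m := Nat.find hex with hm
  have hPm : P m := Nat.find_spec hex
  have hfirst : ∀ n < m, ¬ P n := fun n hn => Nat.find_min hex hn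
  have hmN : m ≤ N := Nat.find_min' hex hPN
  obtain ⟨k, hki, hkL, hjunc⟩ := hPm
  refine ⟨m, k, hmN, hki, hkL, hjunc, ?_⟩
  by_cases hpar : k % 2 = m % 2
  · -- forward glue: path to v
    left
    refine ⟨hpar, ?_⟩
    set n0 := m + (L - k) with hn0
    set φ : ℕ → V := fun a => if a ≤ m then c.getD a x else p.getD (k + (a - m)) f with hφ
    have hφc : ∀ a ≤ m, φ a = c.getD a x := by intro a ha; simp [hφ, ha]
    have hφp : ∀ a, m < a → a ≤ n0 → φ a = p.getD (k + (a - m)) f := by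
      intro a ha _; simp [hφ, Nat.not_le.mpr ha]
    have hinj : ∀ a ≤ n0, ∀ b ≤ n0, φ a = φ b → a = b := by
      have key : ∀ a ≤ n0, ∀ b ≤ n0, a < b → φ a = φ b → False := by
        intro a han b hbn hab he
        by_cases hbm : b ≤ m
        · have := nodup_inj c hcnodup a b x (by omega) (by omega)
            (by rw [← hφc a (by omega), ← hφc b hbm]; exact he)
          omega
        · have hb' : φ b = p.getD (k + (b - m)) f := hφp b (by omega) hbn
          have hkb : k + (b - m) ≤ L := by omega
          by_cases ham : a ≤ m
          · rcases Nat.lt_or_ge a m with ha' | ha'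
            · exact hfirst a ha' ⟨k + (b - m), by omega, hkb,
                by rw [← hφc a ham, he, hb']⟩
            · have ham' : a = m := by omega
              have h4 : φ a = p.getD k f := by rw [hφc a ham, ham', hjunc]
              have : k = k + (b - m) := by
                refine nodup_inj p hpnodup _ _ f (by omega) (by omega) ?_
                rw [← h4, he, hb']
              omega
          · have ha' : φ a = p.getD (k + (a - m)) f := hφp a (by omega) han
            have := nodup_inj p hpnodup (k + (a - m)) (k + (b - m)) f
              (by omega) (by omega) (by rw [← ha', ← hb', he])
            omega
      intro a ha b hb he
      rcases Nat.lt_trichotomy a b with h | h | h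
      · exact absurd he (fun he => key a ha b hb h he)
      · exact h
      · exact absurd he.symm (fun he => key b hb a ha h he)
    have hedge : ∀ t < n0, g.adj (φ t) (φ (t+1)) ∧ (g.M (φ t) (φ (t+1)) ↔ t % 2 = 1) := by
      intro t htn
      rcases Nat.lt_trichotomy t m with h | h | h
      · rw [hφc t (by omega), hφc (t+1) (by omega)]
        exact hcedge t (by omega)
      · have hkl : k < L := by omega
        rw [h]
        rw [hφc m le_rfl, hjunc, hφp (m+1) (by omega) (by omega)]
        have : k + (m + 1 - m) = k + 1 := by omega
        rw [this]
        have := hpedge k (by omega)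
        exact ⟨this.1, by rw [this.2]; omega⟩
      · rw [hφp t (by omega) (by omega), hφp (t+1) (by omega) (by omega)]
        have h1 : k + (t + 1 - m) = (k + (t - m)) + 1 := by omega
        rw [h1]
        have := hpedge (k + (t - m)) (by omega)
        exact ⟨this.1, by rw [this.2]; omega⟩
    have halt := altPath_chain g φ n0 hinj hedge
    have hφ0 : φ 0 = x := by rw [hφc 0 (by omega), hc0]
    have hφn : φ n0 = v := by
      have hvL : p.getD L f = v := by
        have := getD_last p v f hplast
        rwa [hL, Nat.add_sub_cancel] at this
      by_cases hkL' : k = L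
      · have : n0 = m := by omega
        rw [this, hφc m (le_refl m), hjunc, hkL', hvL]
      · rw [hφp n0 (by omega) (le_refl _)]
        have : k + (n0 - m) = L := by omega
        rw [this, hvL]
    rw [hφ0, hφn] at halt
    exact ⟨chain φ n0, x, ⟨hxun, halt⟩, by rw [chain_length]⟩
  · -- backward glue: path to p.getD i f
    right
    refine ⟨hpar, ?_⟩
    set n0 := m + (k - i) with hn0
    set φ : ℕ → V := fun a => if a ≤ m then c.getD a x else p.getD (k - (a - m)) f with hφ
    have hφc : ∀ a ≤ m, φ a = c.getD a x := by intro a ha; simp [hφ, ha]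
    have hφp : ∀ a, m < a → a ≤ n0 → φ a = p.getD (k - (a - m)) f := by
      intro a ha _; simp [hφ, Nat.not_le.mpr ha]
    have hinj : ∀ a ≤ n0, ∀ b ≤ n0, φ a = φ b → a = b := by
      have key : ∀ a ≤ n0, ∀ b ≤ n0, a < b → φ a = φ b → False := by
        intro a han b hbn hab he
        by_cases hbm : b ≤ m
        · have := nodup_inj c hcnodup a b x (by omega) (by omega)
            (by rw [← hφc a (by omega), ← hφc b hbm]; exact he)
          omega
        · have hb' : φ b = p.getD (k - (b - m)) f := hφp b (by omega) hbn
          have hkb1 : i ≤ k - (b - m) := by omega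
          have hkb2 : k - (b - m) < k := by omega
          by_cases ham : a ≤ m
          · rcases Nat.lt_or_ge a m with ha' | ha'
            · exact hfirst a ha' ⟨k - (b - m), hkb1, by omega,
                by rw [← hφc a ham, he, hb']⟩
            · have ham' : a = m := by omega
              have h4 : φ a = p.getD k f := by rw [hφc a ham, ham', hjunc]
              have : k = k - (b - m) := by
                refine nodup_inj p hpnodup _ _ f (by omega) (by omega) ?_
                rw [← h4, he, hb']
              omega
          · have ha' : φ a = p.getD (k - (a - m)) f := hφp a (by omega) han
            have := nodup_inj p hpnodup (k - (a - m)) (k - (b - m)) f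
              (by omega) (by omega) (by rw [← ha', ← hb', he])
            omega
      intro a ha b hb he
      rcases Nat.lt_trichotomy a b with h | h | h
      · exact absurd he (fun he => key a ha b hb h he)
      · exact h
      · exact absurd he.symm (fun he => key b hb a ha h he)
    have hedge : ∀ t < n0, g.adj (φ t) (φ (t+1)) ∧ (g.M (φ t) (φ (t+1)) ↔ t % 2 = 1) := by
      intro t htn
      rcases Nat.lt_trichotomy t m with h | h | h
      · rw [hφc t (by omega), hφc (t+1) (by omega)]
        exact hcedge t (by omega)
      · have hik : i < k := by omega
        rw [h]
        rw [hφc m le_rfl, hjunc, hφp (m+1) (by omega) (by omega)]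
        have h2 : k - (m + 1 - m) = (k - 1) := by omega
        rw [h2]
        have he := hpedge (k - 1) (by omega)
        have h3 : k - 1 + 1 = k := by omega
        rw [h3] at he
        refine ⟨g.symm _ _ he.1, ?_⟩
        constructor
        · intro hM
          have := he.2.mp (g.M_symm _ _ hM)
          omega
        · intro hm2
          exact g.M_symm _ _ (he.2.mpr (by omega))
      · rw [hφp t (by omega) (by omega), hφp (t+1) (by omega) (by omega)]
        have h1 : k - (t + 1 - m) + 1 = k - (t - m) := by omega
        have he := hpedge (k - (t + 1 - m)) (by omega)
        rw [h1] at he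
        refine ⟨g.symm _ _ he.1, ?_⟩
        constructor
        · intro hM
          have := he.2.mp (g.M_symm _ _ hM)
          omega
        · intro hm2
          exact g.M_symm _ _ (he.2.mpr (by omega))
    have halt := altPath_chain g φ n0 hinj hedge
    have hφ0 : φ 0 = x := by rw [hφc 0 (by omega), hc0]
    have hφn : φ n0 = p.getD i f := by
      by_cases hki' : k = i
      · have : n0 = m := by omega
        rw [this, hφc m (le_refl m), hjunc, hki']
      · rw [hφp n0 (by omega) (le_refl _)]
        have : k - (n0 - m) = i := by omega
        rw [this]
    rw [hφ0, hφn] at halt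
    exact ⟨chain φ n0, x, ⟨hxun, halt⟩, by rw [chain_length]⟩

end MGAux
namespace MGAux

lemma altPath_length_pos {g : MatchedGraph V} {p : List V} {b v : V}
    (h : g.AltPath p b v) : 0 < p.length := by
  cases p with
  | nil => exact absurd h.1 (by simp)
  | cons a l => simp

end MGAux

open MGAux in
theorem prefix_eq_minlevel_of_tenacity_gt' (g : MatchedGraph V) (p : List V)
    (f v : V) (hp : g.IsEvenlevelPath p f v ∨ g.IsOddlevelPath p f v)
    (i : ℕ) (hi : i < p.length)
    (ht : g.tenacity v < g.tenacity (p.getD i f)) :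
    (i : ℕ∞) = g.minlevel (p.getD i f) := by
  classical
  -- basic unpacking
  obtain ⟨hpf, hLspec⟩ : g.AltPathFrom p f v ∧
      (((p.length - 1) % 2 = 0 ∧ ((p.length - 1 : ℕ) : ℕ∞) = g.evenlevel v) ∨
       ((p.length - 1) % 2 = 1 ∧ ((p.length - 1 : ℕ) : ℕ∞) = g.oddlevel v)) := by
    rcases hp with ⟨h1, h2, h3⟩ | ⟨h1, h2, h3⟩
    · exact ⟨h1, Or.inl ⟨Nat.even_iff.mp h2, h3⟩⟩
    · exact ⟨h1, Or.inr ⟨Nat.odd_iff.mp h2, h3⟩⟩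
  have hpalt := hpf.2
  obtain ⟨hphead, hplast, hpnodup, hpedge⟩ := hpalt
  have hpalt : g.AltPath p f v := ⟨hphead, hplast, hpnodup, hpedge⟩
  set L := p.length - 1 with hLdef
  have hplen : p.length = L + 1 := by
    have := altPath_length_pos hpalt; omega
  have hiL : i ≤ L := by omega
  have hvL : p.getD L f = v := by
    have := getD_last p v f hplast; rwa [hLdef]
  set u := p.getD i f with hu
  -- i = L is impossible
  have hiLlt : i < L := by
    rcases Nat.lt_or_ge i L with h | h
    · exact h
    · exfalso
      have : i = L := by omega
      rw [hu, this, hvL] at ht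
      exact absurd ht (lt_irrefl _)
  -- minimality of L among parity-L paths to v
  have hminV : ∀ (r : List V) (z : V), g.AltPathFrom r z v →
      (r.length - 1) % 2 = L % 2 → (L : ℕ∞) ≤ ((r.length - 1 : ℕ) : ℕ∞) := by
    intro r z hr hpar
    rcases hLspec with ⟨hL0, hLeq⟩ | ⟨hL1, hLeq⟩
    · exact hLeq ▸ evenlevel_le g hr (by omega)
    · exact hLeq ▸ oddlevel_le g hr (by omega)
  -- the opposite level of v is finite; get lam and path s
  have hTvne : g.tenacity v ≠ ⊤ := ne_top_of_lt ht
  obtain ⟨lam, hlampar, s, zs, hs, hslen, hTv⟩ :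
      ∃ lam : ℕ, lam % 2 ≠ L % 2 ∧ ∃ s zs, g.AltPathFrom s zs v ∧ s.length - 1 = lam ∧
        g.tenacity v = ((L + lam : ℕ) : ℕ∞) := by
    rcases hLspec with ⟨hL0, hLeq⟩ | ⟨hL1, hLeq⟩
    · have hone : g.oddlevel v ≠ ⊤ := by
        intro hh
        rw [MatchedGraph.tenacity, hh, add_top] at hTvne
        exact hTvne rfl
      lift g.oddlevel v to ℕ using hone with lam hlam
      obtain ⟨s, zs, hs, hslen, hpar⟩ := oddlevel_attained g hlam.symm
      exact ⟨lam, by omega, s, zs, hs, hslen, by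
        rw [MatchedGraph.tenacity, ← hLeq, ← hlam]; push_cast; ring_nf⟩
    · have hone : g.evenlevel v ≠ ⊤ := by
        intro hh
        rw [MatchedGraph.tenacity, hh, top_add] at hTvne
        exact hTvne rfl
      lift g.evenlevel v to ℕ using hone with lam hlam
      obtain ⟨s, zs, hs, hslen, hpar⟩ := evenlevel_attained g hlam.symm
      exact ⟨lam, by omega, s, zs, hs, hslen, by
        rw [MatchedGraph.tenacity, ← hLeq, ← hlam]; push_cast; ring_nf⟩
  have hslen' : s.length = lam + 1 := by
    have := altPath_length_pos hs.2; omega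
  -- the prefix of p up to i
  have hpre : ∃ r, g.AltPathFrom r f u ∧ r.length = i + 1 := by
    set φ : ℕ → V := fun t => p.getD t f with hφ
    have hinj : ∀ a ≤ i, ∀ b ≤ i, φ a = φ b → a = b := by
      intro a ha b hb he
      exact nodup_inj p hpnodup a b f (by omega) (by omega) he
    have hedge : ∀ t < i, g.adj (φ t) (φ (t+1)) ∧ (g.M (φ t) (φ (t+1)) ↔ t % 2 = 1) :=
      fun t htt => hpedge t (by omega)
    have halt := altPath_chain g φ i hinj hedge
    have hφ0 : φ 0 = f := getD_zero p f f hphead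
    rw [hφ0] at halt
    exact ⟨chain φ i, ⟨hpf.1, halt⟩, chain_length φ i⟩
  obtain ⟨pre, hpreF, hprelen⟩ := hpre
  have hpre1 : pre.length - 1 = i := by omega
  -- minlevel u ≤ i, get j
  have hminle : g.minlevel u ≤ (i : ℕ∞) := by
    have := minlevel_le g hpreF
    rwa [hpre1] at this
  have hmlne : g.minlevel u ≠ ⊤ := by
    intro hh; rw [hh] at hminle; exact absurd hminle (by simp)
  lift g.minlevel u to ℕ using hmlne with j hj
  have hjle : j ≤ i := by exact_mod_cast hminle
  by_contra hne
  have hji : j < i := by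
    have : i ≠ j := fun h => hne (by rw [h])
    omega
  -- which level is j
  have hjlev : (j % 2 = 0 ∧ g.evenlevel u = (j : ℕ∞)) ∨
      (j % 2 = 1 ∧ g.oddlevel u = (j : ℕ∞)) := by
    have hmin : min (g.evenlevel u) (g.oddlevel u) = (j : ℕ∞) := hj.symm
    rcases min_eq_iff.mp hmin with ⟨he, _⟩ | ⟨he, _⟩
    · obtain ⟨_, _, _, _, hpar⟩ := evenlevel_attained g he
      exact Or.inl ⟨hpar, he⟩
    · obtain ⟨_, _, _, _, hpar⟩ := oddlevel_attained g he
      exact Or.inr ⟨hpar, he⟩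
  -- any path to u has length ≥ j
  have hanyge : ∀ (r : List V) (z : V), g.AltPathFrom r z u →
      (j : ℕ∞) ≤ ((r.length - 1 : ℕ) : ℕ∞) := by
    intro r z hr
    have := minlevel_le g hr
    rwa [← hj] at this
  -- scan the s-path
  obtain ⟨m2, k2, hm2, hk2i, hk2L, hjunc2, hbr2⟩ :=
    scan g p f v hpalt L i hplen hiL s zs v hs lam hslen' L hiL le_rfl hvL.symm
  by_cases hparij : j % 2 = i % 2
  · -- j has the same parity as i
    obtain ⟨ν, hTu, hνle, q, zq, hq, hqlen⟩ :
        ∃ ν : ℕ∞, g.tenacity u = (j : ℕ∞) + ν ∧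
          (∀ (r : List V) (z : V), g.AltPathFrom r z u →
            (r.length - 1) % 2 ≠ i % 2 → ν ≤ ((r.length - 1 : ℕ) : ℕ∞)) ∧
          ∃ q zq, g.AltPathFrom q zq u ∧ q.length = j + 1 := by
      rcases hjlev with ⟨hp0, heq⟩ | ⟨hp1, heq⟩
      · refine ⟨g.oddlevel u, by rw [MatchedGraph.tenacity, heq], ?_, ?_⟩
        · intro r z hr hpar
          exact oddlevel_le g hr (by omega)
        · obtain ⟨q, zq, hq, hqlen, _⟩ := evenlevel_attained g heq
          exact ⟨q, zq, hq, by have := altPath_length_pos hq.2; omega⟩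
      · refine ⟨g.evenlevel u, by rw [MatchedGraph.tenacity, heq, add_comm], ?_, ?_⟩
        · intro r z hr hpar
          exact evenlevel_le g hr (by omega)
        · obtain ⟨q, zq, hq, hqlen, _⟩ := oddlevel_attained g heq
          exact ⟨q, zq, hq, by have := altPath_length_pos hq.2; omega⟩
    have hTl : ((L + lam : ℕ) : ℕ∞) < (j : ℕ∞) + ν := by
      rw [← hTv, ← hTu]; exact ht
    rcases hbr2 with ⟨hpar2, r, z, hr, hrlen⟩ | ⟨hpar2, r, z, hr, hrlen⟩
    · -- s-scan gave a parity-L path to v: lam ≥ i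
      have hr1 : r.length - 1 = m2 + (L - k2) := by omega
      have hLle := hminV r z hr (by rw [hr1]; omega)
      rw [hr1] at hLle
      have hLle' : L ≤ m2 + (L - k2) := by exact_mod_cast hLle
      have hlami : i ≤ lam := by omega
      -- scan the q-path
      obtain ⟨m, k, hmj, hk_i, hk_L, hjunq, hbrq⟩ :=
        scan g p f v hpalt L i hplen hiL q zq u hq j hqlen i le_rfl hiL rfl
      rcases hbrq with ⟨hparq, r', z', hr', hrlen'⟩ | ⟨hparq, r', z', hr', hrlen'⟩
      · have hr1' : r'.length - 1 = m + (L - k) := by omega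
        have hLle2 := hminV r' z' hr' (by rw [hr1']; omega)
        rw [hr1'] at hLle2
        have : L ≤ m + (L - k) := by exact_mod_cast hLle2
        omega
      · -- m < j
        have hqlast : q.getD (j) zq = u := by
          have := getD_last q u zq hq.2.2.1
          rwa [show q.length - 1 = j from by omega] at this
        have hmj' : m < j := by
          rcases Nat.lt_or_ge m j with h | h
          · exact h
          · exfalso
            have hmj2 : m = j := by omega
            rw [hmj2, hqlast] at hjunq
            have hki2 : k = i := nodup_inj p hpnodup k i f (by omega) (by omega)
              (by rw [← hjunq])
            omega
        have hr1' : r'.length - 1 = m + (k - i) := by omega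
        have hν := hνle r' z' hr' (by rw [hr1']; omega)
        rw [hr1'] at hν
        have h2 : ((L + lam : ℕ) : ℕ∞) < ((j + (m + (k - i)) : ℕ) : ℕ∞) := by
          refine lt_of_lt_of_le (lt_of_lt_of_le hTl (add_le_add_right hν _)) (le_of_eq ?_)
          push_cast
          ring
        have hfin : L + lam < j + (m + (k - i)) := by exact_mod_cast h2
        omega
    · -- s-scan gave an opposite-parity path to u
      have hr1 : r.length - 1 = m2 + (k2 - i) := by omega
      have hν := hνle r z hr (by rw [hr1]; omega)
      rw [hr1] at hν
      have h2 : ((L + lam : ℕ) : ℕ∞) < ((j + (m2 + (k2 - i)) : ℕ) : ℕ∞) := by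
        refine lt_of_lt_of_le (lt_of_lt_of_le hTl (add_le_add_right hν _)) (le_of_eq ?_)
        push_cast
        ring
      have hfin : L + lam < j + (m2 + (k2 - i)) := by exact_mod_cast h2
      omega
  · -- j has parity opposite to i : tenacity u ≤ i + j
    have hTu : g.tenacity u ≤ ((i + j : ℕ) : ℕ∞) := by
      rcases hjlev with ⟨hp0, heq⟩ | ⟨hp1, heq⟩
      · have hio : g.oddlevel u ≤ ((i : ℕ) : ℕ∞) := by
          have := oddlevel_le g hpreF (by rw [hpre1]; omega)
          rwa [hpre1] at this
        rw [MatchedGraph.tenacity, heq]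
        calc (j : ℕ∞) + g.oddlevel u ≤ (j : ℕ∞) + (i : ℕ∞) := add_le_add_right hio _
          _ = ((i + j : ℕ) : ℕ∞) := by push_cast; ring
      · have hio : g.evenlevel u ≤ ((i : ℕ) : ℕ∞) := by
          have := evenlevel_le g hpreF (by rw [hpre1]; omega)
          rwa [hpre1] at this
        rw [MatchedGraph.tenacity, heq]
        calc g.evenlevel u + (j : ℕ∞) ≤ (i : ℕ∞) + (j : ℕ∞) := add_le_add_left hio _
          _ = ((i + j : ℕ) : ℕ∞) := by push_cast; ring
    have hlt : L + lam < i + j := by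
      have := lt_of_lt_of_le (hTv ▸ ht) hTu
      exact_mod_cast this
    rcases hbr2 with ⟨hpar2, r, z, hr, hrlen⟩ | ⟨hpar2, r, z, hr, hrlen⟩
    · have hr1 : r.length - 1 = m2 + (L - k2) := by omega
      have hLle := hminV r z hr (by rw [hr1]; omega)
      rw [hr1] at hLle
      have : L ≤ m2 + (L - k2) := by exact_mod_cast hLle
      omega
    · have hr1 : r.length - 1 = m2 + (k2 - i) := by omega
      have hge := hanyge r z hr
      rw [hr1] at hge
      have : j ≤ m2 + (k2 - i) := by exact_mod_cast hge
      omega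

/-- On an `evenlevel(v)` or `oddlevel(v)` path `p`, every vertex
`u` on `p` with `tenacity(u) > tenacity(v)` occurs at distance `minlevel(u)`
from the unmatched endpoint of `p`. -/
theorem prefix_eq_minlevel_of_tenacity_gt (g : MatchedGraph V) (p : List V)
    (f v : V) (hp : g.IsEvenlevelPath p f v ∨ g.IsOddlevelPath p f v)
    (i : ℕ) (hi : i < p.length)
    (ht : g.tenacity v < g.tenacity (p.getD i f)) :
    (i : ℕ∞) = g.minlevel (p.getD i f) := by
  exact prefix_eq_minlevel_of_tenacity_gt' g p f v hp i hi ht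
end

section
/- Let p be an evenlevel(v) or oddlevel(v) path and let u lie on p. If u is not BFS-honest with respect to p, then tenacity(u) < tenacity(v). -/
open scoped Classical

universe u

variable {V : Type u}

/-! ### Auxiliary development for Statement 4 -/

namespace MatchedGraph

/-- Function form of an alternating path: `a 0, a 1, ..., a n`. -/
def AltFn (g : MatchedGraph V) (n : ℕ) (a : ℕ → V) : Prop :=
  (∀ s t, s ≤ n → t ≤ n → a s = a t → s = t) ∧
  ∀ s, s < n → g.adj (a s) (a (s+1)) ∧ (g.M (a s) (a (s+1)) ↔ s % 2 = 1)

lemma AltFn.mono {g : MatchedGraph V} {n m : ℕ} {a : ℕ → V} (h : g.AltFn n a)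
    (hm : m ≤ n) : g.AltFn m a :=
  ⟨fun s t hs ht => h.1 s t (hs.trans hm) (ht.trans hm),
   fun s hs => h.2 s (lt_of_lt_of_le hs hm)⟩

/-- Parity-generic level function. -/
noncomputable def levelB (g : MatchedGraph V) (k : ℕ) (v : V) : ℕ∞ :=
  sInf {n : ℕ∞ | ∃ p f, g.AltPathFrom p f v ∧ (p.length - 1) % 2 = k % 2 ∧
    n = ((p.length - 1 : ℕ) : ℕ∞)}

lemma levelB_congr (g : MatchedGraph V) {k k' : ℕ} (h : k % 2 = k' % 2) (v : V) :
    g.levelB k v = g.levelB k' v := by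
  unfold levelB; rw [h]

lemma evenlevel_eq (g : MatchedGraph V) (v : V) : g.evenlevel v = g.levelB 0 v := by
  unfold evenlevel levelB
  congr 1
  ext n
  simp only [Set.mem_setOf_eq, Nat.even_iff, Nat.zero_mod]

lemma oddlevel_eq (g : MatchedGraph V) (v : V) : g.oddlevel v = g.levelB 1 v := by
  unfold oddlevel levelB
  congr 1
  ext n
  simp only [Set.mem_setOf_eq, Nat.odd_iff, Nat.mod_self]

lemma tenacity_eq (g : MatchedGraph V) (k : ℕ) (v : V) :
    g.tenacity v = g.levelB k v + g.levelB (k+1) v := by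
  rcases Nat.even_or_odd k with hk | hk
  · have h0 := Nat.even_iff.mp hk
    rw [tenacity, evenlevel_eq, oddlevel_eq,
      levelB_congr g (show (0:ℕ) % 2 = k % 2 by omega) v,
      levelB_congr g (show (1:ℕ) % 2 = (k+1) % 2 by omega) v]
  · have h0 := Nat.odd_iff.mp hk
    rw [tenacity, evenlevel_eq, oddlevel_eq,
      levelB_congr g (show (0:ℕ) % 2 = (k+1) % 2 by omega) v,
      levelB_congr g (show (1:ℕ) % 2 = k % 2 by omega) v, add_comm]

/-- An alternating fn-path from an unmatched vertex bounds the level. -/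
lemma levelB_le (g : MatchedGraph V) {n : ℕ} {a : ℕ → V} (h : g.AltFn n a)
    (hu : g.unmatched (a 0)) : g.levelB n (a n) ≤ (n : ℕ∞) := by
  set p : List V := List.ofFn (fun t : Fin (n+1) => a t) with hpdef
  have hlen : p.length = n + 1 := List.length_ofFn
  have hget : ∀ s, s ≤ n → p.getD s (a 0) = a s := by
    intro s hs
    rw [List.getD_eq_getElem _ _ (by omega)]
    simp only [hpdef, List.getElem_ofFn]
  apply sInf_le
  refine ⟨p, a 0, ⟨hu, ?_, ?_, ?_, ?_⟩, by simp [hlen], by simp [hlen]⟩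
  · rw [hpdef, List.ofFn_succ]
    rfl
  · rw [List.getLast?_eq_getElem?, hlen]
    simp only [Nat.add_sub_cancel]
    rw [List.getElem?_eq_getElem (by omega)]
    have := hget n le_rfl
    rw [List.getD_eq_getElem _ _ (by omega)] at this
    rw [this]
  · rw [hpdef]
    refine List.nodup_ofFn.mpr ?_
    intro s t hst
    exact Fin.ext (h.1 s t (by omega) (by omega) hst)
  · intro s hs
    rw [hlen] at hs
    rw [hget s (by omega), hget (s+1) (by omega)]
    exact h.2 s (by omega)

lemma fn_of_list (g : MatchedGraph V) {p : List V} {f v : V} (h : g.AltPath p f v) :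
    g.AltFn (p.length - 1) (fun s => p.getD s f) ∧ p.getD 0 f = f ∧
      p.getD (p.length - 1) f = v ∧ 1 ≤ p.length := by
  obtain ⟨h1, h2, h3, h4⟩ := h
  have hne : p ≠ [] := by intro h; rw [h] at h1; simp at h1
  have hlen : 1 ≤ p.length := by
    cases p with
    | nil => exact absurd rfl hne
    | cons x t => simp
  refine ⟨⟨?_, ?_⟩, ?_, ?_, hlen⟩
  · intro s t hs ht hst
    simp only at hst
    rw [List.getD_eq_getElem _ _ (by omega), List.getD_eq_getElem _ _ (by omega)] at hst
    exact h3.getElem_inj_iff.mp hst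
  · intro s hs
    exact h4 s (by omega)
  · cases p with
    | nil => exact absurd rfl hne
    | cons x t =>
      have : x = f := by simpa using h1
      simpa using this
  · rw [List.getLast?_eq_getElem?, List.getElem?_eq_getElem (by omega)] at h2
    rw [List.getD_eq_getElem _ _ (by omega)]
    exact Option.some_injective _ h2

lemma exists_fn_of_levelB (g : MatchedGraph V) {k : ℕ} {v : V}
    (h : g.levelB k v ≠ ⊤) :
    ∃ (n : ℕ) (a : ℕ → V), g.AltFn n a ∧ g.unmatched (a 0) ∧ a n = v ∧
      n % 2 = k % 2 ∧ g.levelB k v = (n : ℕ∞) := by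
  classical
  set S : Set ℕ∞ := {n : ℕ∞ | ∃ p f, g.AltPathFrom p f v ∧
    (p.length - 1) % 2 = k % 2 ∧ n = ((p.length - 1 : ℕ) : ℕ∞)} with hSdef
  have hSne : S.Nonempty := by
    by_contra hS
    rw [Set.not_nonempty_iff_eq_empty] at hS
    apply h
    rw [levelB, ← hSdef, hS, sInf_empty]
  set T : Set ℕ := {m : ℕ | (m : ℕ∞) ∈ S} with hTdef
  have hTne : T.Nonempty := by
    obtain ⟨x, hx⟩ := hSne
    obtain ⟨p, f, hpf, hpar, hval⟩ := hx
    exact ⟨p.length - 1, p, f, hpf, hpar, rfl⟩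
  have hmem := Nat.sInf_mem hTne
  obtain ⟨p, f, hpf, hpar, hval⟩ := hmem
  have hinf : g.levelB k v = ((sInf T : ℕ) : ℕ∞) := by
    apply le_antisymm
    · exact sInf_le (by exact Nat.sInf_mem hTne)
    · apply le_sInf
      rintro x ⟨q, f', hq, hqpar, rfl⟩
      have : q.length - 1 ∈ T := ⟨q, f', hq, hqpar, rfl⟩
      exact_mod_cast Nat.sInf_le this
  obtain ⟨hfn, h0, hlast, hlen⟩ := fn_of_list g hpf.2
  refine ⟨p.length - 1, (fun s => p.getD s f), hfn, ?_, hlast, ?_, ?_⟩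
  · simpa only [h0] using hpf.1
  · exact hpar
  · rw [hinf, hval]

/-- Splice a prefix of `a` (up to `c`) onto the tail of `b` (from `d` on),
when the junction vertices agree and parities match. -/
lemma splice_fwd (g : MatchedGraph V) {n m c d : ℕ} {a b : ℕ → V}
    (ha : g.AltFn n a) (hb : g.AltFn m b) (hc : c ≤ n) (hd : d ≤ m)
    (hpar : c % 2 = d % 2) (hjoin : a c = b d)
    (hdisj : ∀ s t, s < c → d ≤ t → t ≤ m → a s ≠ b t) :
    ∃ w : ℕ → V, g.AltFn (c + (m - d)) w ∧ w (c + (m - d)) = b m ∧ w 0 = a 0 := by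
  refine ⟨fun s => if s ≤ c then a s else b (d + (s - c)), ⟨?_, ?_⟩, ?_, ?_⟩
  · intro s t hs ht hst
    simp only at hst
    by_cases h1 : s ≤ c <;> by_cases h2 : t ≤ c
    · rw [if_pos h1, if_pos h2] at hst
      exact ha.1 s t (h1.trans hc) (h2.trans hc) hst
    · rw [if_pos h1, if_neg h2] at hst
      exfalso
      rcases lt_or_eq_of_le h1 with h1' | rfl
      · exact hdisj s _ h1' (by omega) (by omega) hst
      · have : d = d + (t - s) := hb.1 _ _ hd (by omega) (hjoin.symm.trans hst)
        omega
    · rw [if_neg h1, if_pos h2] at hst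
      exfalso
      rcases lt_or_eq_of_le h2 with h2' | rfl
      · exact hdisj t _ h2' (by omega) (by omega) hst.symm
      · have : d = d + (s - t) := hb.1 _ _ hd (by omega) (hjoin.symm.trans hst.symm)
        omega
    · rw [if_neg h1, if_neg h2] at hst
      have := hb.1 _ _ (by omega) (by omega) hst
      omega
  · intro s hs
    simp only
    by_cases h1 : s + 1 ≤ c
    · rw [if_pos (by omega), if_pos h1]
      exact ha.2 s (by omega)
    · by_cases h2 : s ≤ c
      · have hsc : s = c := by omega
        subst hsc
        rw [if_pos h2, if_neg (by omega)]
        have hd' : d < m := by omega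
        have hedge := hb.2 d hd'
        rw [show d + (s + 1 - s) = d + 1 by omega, hjoin]
        exact ⟨hedge.1, hedge.2.trans (by omega)⟩
      · rw [if_neg h2, if_neg (by omega)]
        rw [show d + (s + 1 - c) = (d + (s - c)) + 1 by omega]
        have hedge := hb.2 (d + (s - c)) (by omega)
        exact ⟨hedge.1, hedge.2.trans (by omega)⟩
  · simp only
    by_cases h : c + (m - d) ≤ c
    · rw [if_pos h, show c + (m - d) = c by omega, hjoin, show d = m by omega]
    · rw [if_neg h, show d + (c + (m - d) - c) = m by omega]
  · simp only [if_pos (Nat.zero_le c)]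

/-- Splice a prefix of `a` (up to `c`) onto the *reversal* of `b[e..d]`,
when parities are opposite at the junction. -/
lemma splice_rev (g : MatchedGraph V) {n m c d e : ℕ} {a b : ℕ → V}
    (ha : g.AltFn n a) (hb : g.AltFn m b) (hc : c ≤ n) (he : e ≤ d) (hd : d ≤ m)
    (hpar : c % 2 ≠ d % 2) (hjoin : a c = b d)
    (hdisj : ∀ s t, s < c → e ≤ t → t < d → a s ≠ b t) :
    ∃ w : ℕ → V, g.AltFn (c + (d - e)) w ∧ w (c + (d - e)) = b e ∧ w 0 = a 0 := by
  refine ⟨fun s => if s ≤ c then a s else b (d - (s - c)), ⟨?_, ?_⟩, ?_, ?_⟩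
  · intro s t hs ht hst
    simp only at hst
    by_cases h1 : s ≤ c <;> by_cases h2 : t ≤ c
    · rw [if_pos h1, if_pos h2] at hst
      exact ha.1 s t (h1.trans hc) (h2.trans hc) hst
    · rw [if_pos h1, if_neg h2] at hst
      exfalso
      rcases lt_or_eq_of_le h1 with h1' | rfl
      · exact hdisj s _ h1' (by omega) (by omega) hst
      · have : d = d - (t - s) := hb.1 _ _ hd (by omega) (hjoin.symm.trans hst)
        omega
    · rw [if_neg h1, if_pos h2] at hst
      exfalso
      rcases lt_or_eq_of_le h2 with h2' | rfl
      · exact hdisj t _ h2' (by omega) (by omega) hst.symm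
      · have : d = d - (s - t) := hb.1 _ _ hd (by omega) (hjoin.symm.trans hst.symm)
        omega
    · rw [if_neg h1, if_neg h2] at hst
      have := hb.1 _ _ (by omega) (by omega) hst
      omega
  · intro s hs
    simp only
    by_cases h1 : s + 1 ≤ c
    · rw [if_pos (by omega), if_pos h1]
      exact ha.2 s (by omega)
    · by_cases h2 : s ≤ c
      · have hsc : s = c := by omega
        subst hsc
        rw [if_pos h2, if_neg (by omega)]
        have hd1 : 1 ≤ d := by omega
        have hedge := hb.2 (d - 1) (by omega)
        rw [show d - (s + 1 - s) = d - 1 by omega, hjoin]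
        rw [show d - 1 + 1 = d by omega] at hedge
        refine ⟨g.symm _ _ hedge.1, ?_⟩
        have hMs : g.M (b d) (b (d-1)) ↔ g.M (b (d-1)) (b d) :=
          ⟨g.M_symm _ _, g.M_symm _ _⟩
        exact (hMs.trans hedge.2).trans (by omega)
      · rw [if_neg h2, if_neg (by omega)]
        have hkey : s + 1 - c ≤ d - e := by omega
        have hcs : c < s := by omega
        rw [show d - (s - c) = (d - (s + 1 - c)) + 1 by omega]
        have hedge := hb.2 (d - (s + 1 - c)) (by omega)
        refine ⟨g.symm _ _ hedge.1, ?_⟩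
        have hMs : g.M (b ((d - (s + 1 - c)) + 1)) (b (d - (s + 1 - c))) ↔
            g.M (b (d - (s + 1 - c))) (b ((d - (s + 1 - c)) + 1)) :=
          ⟨g.M_symm _ _, g.M_symm _ _⟩
        exact (hMs.trans hedge.2).trans (by omega)
  · simp only
    by_cases h : c + (d - e) ≤ c
    · rw [if_pos h, show c + (d - e) = c by omega, hjoin, show d = e by omega]
    · rw [if_neg h, show d - (c + (d - e) - c) = e by omega]
  · simp only [if_pos (Nat.zero_le c)]

end MatchedGraph


namespace MatchedGraph

lemma main_fn (g : MatchedGraph V) {l i : ℕ} {b : ℕ → V}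
    (hb : g.AltFn l b) (hf : g.unmatched (b 0)) (hil : i ≤ l)
    (hlv : ((l : ℕ) : ℕ∞) = g.levelB l (b l))
    (hne : g.levelB i (b i) ≠ (i : ℕ∞)) :
    g.tenacity (b i) < g.tenacity (b l) := by
  classical
  -- the minimum parity-`i` level of `b i` is some `j ≤ i - 2`
  have hle : g.levelB i (b i) ≤ (i : ℕ∞) := levelB_le g (hb.mono hil) hf
  have hnetop : g.levelB i (b i) ≠ ⊤ := by
    intro h; rw [h] at hle; simp at hle
  obtain ⟨j, q, hq, hq0, hqi, hjpar, hjval⟩ := exists_fn_of_levelB g hnetop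
  have hji : j + 2 ≤ i := by
    rw [hjval] at hle hne
    have h1 : j ≤ i := by exact_mod_cast hle
    have h2 : j ≠ i := by intro h; exact hne (by rw [h])
    omega
  -- analysis of the first intersection of `q` with `b (i+1 .. l)`
  set S : Set ℕ := {s | s ≤ j ∧ ∃ t, i + 1 ≤ t ∧ t ≤ l ∧ q s = b t} with hSdef
  have hG1 : ∃ c d, c + 1 ≤ j ∧ i + 1 ≤ d ∧ d ≤ l ∧
      g.levelB (i+1) (b i) ≤ ((c + (d - i) : ℕ) : ℕ∞) := by
    by_cases hSne : S.Nonempty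
    · obtain ⟨c, hcS, hmin⟩ : ∃ c, c ∈ S ∧ ∀ s, s < c → s ∉ S :=
        ⟨sInf S, Nat.sInf_mem hSne, fun s hs => Nat.notMem_of_lt_sInf hs⟩
      obtain ⟨hcj, d, hdi, hdl, hjoin⟩ := hcS
      have hcj' : c + 1 ≤ j := by
        rcases lt_or_eq_of_le hcj with h | h
        · omega
        · exfalso
          have hbid : b i = b d := by rw [← hqi, ← h, hjoin]

          have := hb.1 i d hil hdl hbid
          omega
      by_cases hcd : c % 2 = d % 2
      · exfalso
        have hdisj : ∀ s t, s < c → d ≤ t → t ≤ l → q s ≠ b t := fun s t hs ht htl hcon =>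
          hmin s hs ⟨by omega, t, by omega, htl, hcon⟩
        obtain ⟨w, hsp, hend, hstart⟩ := splice_fwd g hq hb (by omega) hdl hcd hjoin hdisj
        have hle2 := levelB_le g hsp (by rw [hstart]; exact hq0)
        rw [hend] at hle2
        have h5 : ((l : ℕ) : ℕ∞) ≤ ((c + (l - d) : ℕ) : ℕ∞) := by
          rw [hlv, levelB_congr g (show l % 2 = (c + (l - d)) % 2 by omega) (b l)]
          exact hle2
        have h6 : l ≤ c + (l - d) := by exact_mod_cast h5
        omega
      · have hdisj : ∀ s t, s < c → i ≤ t → t < d → q s ≠ b t := by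
          intro s t hs hti htd hcon
          rcases lt_or_eq_of_le hti with hti' | rfl
          · exact hmin s hs ⟨by omega, t, by omega, by omega, hcon⟩
          · have := hq.1 s j (by omega) le_rfl (hcon.trans hqi.symm)
            omega
        obtain ⟨w, hsp, hend, hstart⟩ :=
          splice_rev g hq hb (by omega) (show i ≤ d by omega) hdl hcd hjoin hdisj
        have hle2 := levelB_le g hsp (by rw [hstart]; exact hq0)
        rw [hend] at hle2
        refine ⟨c, d, hcj', hdi, hdl, ?_⟩
        rw [levelB_congr g (show (i+1) % 2 = (c + (d - i)) % 2 by omega) (b i)]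
        exact hle2
    · exfalso
      have hdisj : ∀ s t, s < j → i ≤ t → t ≤ l → q s ≠ b t := by
        intro s t hs hti htl hcon
        rcases lt_or_eq_of_le hti with hti' | rfl
        · exact hSne ⟨s, by omega, t, by omega, htl, hcon⟩
        · have := hq.1 s j (by omega) le_rfl (hcon.trans hqi.symm)
          omega
      obtain ⟨w, hsp, hend, hstart⟩ := splice_fwd g hq hb le_rfl hil hjpar hqi hdisj
      have hle2 := levelB_le g hsp (by rw [hstart]; exact hq0)
      rw [hend] at hle2
      have h5 : ((l : ℕ) : ℕ∞) ≤ ((j + (l - i) : ℕ) : ℕ∞) := by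
        rw [hlv, levelB_congr g (show l % 2 = (j + (l - i)) % 2 by omega) (b l)]
        exact hle2
      have h6 : l ≤ j + (l - i) := by exact_mod_cast h5
      omega
  obtain ⟨c, d, hcj2, hdi, hdl2, hG1⟩ := hG1
  rw [tenacity_eq g i (b i), tenacity_eq g l (b l), ← hlv, hjval]
  by_cases hltop : g.levelB (l+1) (b l) = ⊤
  · rw [hltop]
    have h1 : (j : ℕ∞) + g.levelB (i+1) (b i) ≤ ((j + (c + (d - i)) : ℕ) : ℕ∞) := by
      calc (j : ℕ∞) + g.levelB (i+1) (b i) ≤ (j : ℕ∞) + ((c + (d - i) : ℕ) : ℕ∞) :=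
            add_le_add_right hG1 _
        _ = ((j + (c + (d - i)) : ℕ) : ℕ∞) := by push_cast; ring
    refine lt_of_le_of_lt h1 ?_
    rw [add_top]
    exact WithTop.coe_lt_top _
  · obtain ⟨l'', r, hr, hr0, hrl, hlpar, hlval⟩ := exists_fn_of_levelB g hltop
    rw [hlval]
    set S' : Set ℕ := {s | s ≤ l'' ∧ ∃ t, i ≤ t ∧ t ≤ l ∧ r s = b t} with hS'def
    have hS'ne : S'.Nonempty := ⟨l'', le_rfl, l, hil, le_rfl, hrl⟩
    obtain ⟨c', hc'S, hmin'⟩ : ∃ c', c' ∈ S' ∧ ∀ s, s < c' → s ∉ S' :=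
      ⟨sInf S', Nat.sInf_mem hS'ne, fun s hs => Nat.notMem_of_lt_sInf hs⟩
    obtain ⟨hc'le, d', hd'i, hd'l, hjoin'⟩ := hc'S
    suffices hsuff : ∃ Mv : ℕ, g.levelB (i+1) (b i) ≤ (Mv : ℕ∞) ∧ j + Mv < l + l'' by
      obtain ⟨Mv, h1, h2⟩ := hsuff
      calc (j : ℕ∞) + g.levelB (i+1) (b i) ≤ (j : ℕ∞) + (Mv : ℕ∞) := add_le_add_right h1 _
        _ = ((j + Mv : ℕ) : ℕ∞) := by push_cast; ring
        _ < ((l + l'' : ℕ) : ℕ∞) := by exact_mod_cast h2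
        _ = ((l : ℕ) : ℕ∞) + ((l'' : ℕ) : ℕ∞) := by push_cast; ring
    rcases lt_or_eq_of_le hd'i with hd'gt | heq
    · -- i < d'
      by_cases hc'd' : c' % 2 = d' % 2
      · have hdisj : ∀ s t, s < c' → d' ≤ t → t ≤ l → r s ≠ b t := fun s t hs ht htl hcon =>
          hmin' s hs ⟨by omega, t, by omega, htl, hcon⟩
        obtain ⟨w, hsp, hend, hstart⟩ := splice_fwd g hr hb hc'le hd'l hc'd' hjoin' hdisj
        have hle2 := levelB_le g hsp (by rw [hstart]; exact hr0)
        rw [hend] at hle2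
        have h5 : ((l : ℕ) : ℕ∞) ≤ ((c' + (l - d') : ℕ) : ℕ∞) := by
          rw [hlv, levelB_congr g (show l % 2 = (c' + (l - d')) % 2 by omega) (b l)]
          exact hle2
        have h6 : l ≤ c' + (l - d') := by exact_mod_cast h5
        exact ⟨c + (d - i), hG1, by omega⟩
      · have hdisj : ∀ s t, s < c' → i ≤ t → t < d' → r s ≠ b t := fun s t hs ht htd hcon =>
          hmin' s hs ⟨by omega, t, ht, by omega, hcon⟩
        obtain ⟨w, hsp, hend, hstart⟩ :=
          splice_rev g hr hb hc'le (show i ≤ d' by omega) hd'l hc'd' hjoin' hdisj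
        have hle2 := levelB_le g hsp (by rw [hstart]; exact hr0)
        rw [hend] at hle2
        refine ⟨c' + (d' - i), ?_, by omega⟩
        rw [levelB_congr g (show (i+1) % 2 = (c' + (d' - i)) % 2 by omega) (b i)]
        exact hle2
    · -- d' = i, so r c' = b i
      have hjoin'' : r c' = b i := by rw [hjoin', ← heq]
      by_cases hc'par : c' % 2 = i % 2
      · have h1 : g.levelB i (b i) ≤ ((c' : ℕ) : ℕ∞) := by
          have h2 := levelB_le g (hr.mono hc'le) hr0
          rw [hjoin''] at h2
          rw [levelB_congr g (show i % 2 = c' % 2 from hc'par.symm) (b i)]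
          exact h2
        have hjc' : j ≤ c' := by
          rw [hjval] at h1
          exact_mod_cast h1
        exact ⟨c + (d - i), hG1, by omega⟩
      · have h1 : g.levelB (i+1) (b i) ≤ ((c' : ℕ) : ℕ∞) := by
          have h2 := levelB_le g (hr.mono hc'le) hr0
          rw [hjoin''] at h2
          rw [levelB_congr g (show (i+1) % 2 = c' % 2 by omega) (b i)]
          exact h2
        exact ⟨c', h1, by omega⟩

end MatchedGraph




/-- On an `evenlevel(v)` or `oddlevel(v)` path `p`, if a vertex
`u` on `p` is not BFS-honest w.r.t. `p` then `tenacity(u) < tenacity(v)`. -/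
theorem tenacity_lt_of_not_bfsHonest (g : MatchedGraph V) (p : List V)
    (f v : V) (hp : g.IsEvenlevelPath p f v ∨ g.IsOddlevelPath p f v)
    (i : ℕ) (hi : i < p.length) (hdis : ¬ g.BFSHonest p f i) :
    g.tenacity (p.getD i f) < g.tenacity v := by
  obtain ⟨hPF, hlv⟩ : g.AltPathFrom p f v ∧
      ((p.length - 1 : ℕ) : ℕ∞) = g.levelB (p.length - 1) v := by
    rcases hp with ⟨h1, h2, h3⟩ | ⟨h1, h2, h3⟩
    · refine ⟨h1, h3.trans ?_⟩
      have h4 := Nat.even_iff.mp h2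
      rw [MatchedGraph.evenlevel_eq,
        MatchedGraph.levelB_congr g (show (0:ℕ) % 2 = (p.length - 1) % 2 by omega) v]
    · refine ⟨h1, h3.trans ?_⟩
      have h4 := Nat.odd_iff.mp h2
      rw [MatchedGraph.oddlevel_eq,
        MatchedGraph.levelB_congr g (show (1:ℕ) % 2 = (p.length - 1) % 2 by omega) v]
  obtain ⟨hfn, h0, hl, hlen1⟩ := MatchedGraph.fn_of_list g hPF.2
  have hne : g.levelB i (p.getD i f) ≠ (i : ℕ∞) := by
    intro hcon
    apply hdis
    constructor
    · intro hev
      have h4 := Nat.even_iff.mp hev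
      rw [MatchedGraph.evenlevel_eq,
        MatchedGraph.levelB_congr g (show (0:ℕ) % 2 = i % 2 by omega) (p.getD i f)]
      exact hcon
    · intro hod
      have h4 := Nat.odd_iff.mp hod
      rw [MatchedGraph.oddlevel_eq,
        MatchedGraph.levelB_congr g (show (1:ℕ) % 2 = i % 2 by omega) (p.getD i f)]
      exact hcon
  have hu : g.unmatched (p.getD 0 f) := by rw [h0]; exact hPF.1
  have hlv' : ((p.length - 1 : ℕ) : ℕ∞) = g.levelB (p.length - 1) (p.getD (p.length - 1) f) := by
    rw [hl]; exact hlv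
  have h2 : g.tenacity (p.getD i f) < g.tenacity (p.getD (p.length - 1) f) :=
    MatchedGraph.main_fn g hfn hu (by omega) hlv' hne
  rw [hl] at h2
  exact h2
end

section
/- Let v be a vertex whose tenacity t satisfies t_m <= t < l_m, where t_m is the minimum tenacity of any vertex and l_m is the minimum length of an augmenting path. Then there is an even minimum-length alternating path from an unmatched vertex f to v if and only if there is an odd minimum-length alternating path from f to v. -/
open scoped Classical

universe u

variable {V : Type u}

namespace MatchedGraphAux

universe v

variable {V : Type v}

open MatchedGraph

/-- The list `[w 0, w 1, ..., w n]`. -/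
def pathList (w : ℕ → V) (n : ℕ) : List V := (List.range (n+1)).map w

theorem pathList_length (w : ℕ → V) (n : ℕ) : (pathList w n).length = n + 1 := by
  simp [pathList]

theorem pathList_len_sub (w : ℕ → V) (n : ℕ) : (pathList w n).length - 1 = n := by
  simp [pathList]

theorem pathList_getD (w : ℕ → V) (n k : ℕ) (hk : k ≤ n) (d : V) :
    (pathList w n).getD k d = w k := by
  rw [List.getD_eq_getElem _ _ (by simp [pathList]; omega)]
  simp [pathList]

theorem pathList_head? (w : ℕ → V) (n : ℕ) : (pathList w n).head? = some (w 0) := by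
  rw [List.head?_eq_getElem?, List.getElem?_eq_getElem (by simp [pathList])]
  simp [pathList]

theorem pathList_getLast? (w : ℕ → V) (n : ℕ) :
    (pathList w n).getLast? = some (w n) := by
  rw [List.getLast?_eq_getElem?, List.getElem?_eq_getElem (by simp [pathList])]
  simp [pathList]

theorem pathList_nodup (w : ℕ → V) (n : ℕ)
    (hinj : ∀ a ≤ n, ∀ b ≤ n, w a = w b → a = b) : (pathList w n).Nodup := by
  rw [pathList, List.nodup_map_iff_inj_on List.nodup_range]
  intro a ha b hb hab
  exact hinj a (Nat.lt_succ_iff.mp (List.mem_range.mp ha)) b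
    (Nat.lt_succ_iff.mp (List.mem_range.mp hb)) hab

/-- Constructor for `AltPath` from a vertex function. -/
theorem altPath_pathList (g : MatchedGraph V) (w : ℕ → V) (n : ℕ)
    (hinj : ∀ a ≤ n, ∀ b ≤ n, w a = w b → a = b)
    (hadj : ∀ k < n, g.adj (w k) (w (k+1)) ∧ (g.M (w k) (w (k+1)) ↔ k % 2 = 1)) :
    g.AltPath (pathList w n) (w 0) (w n) := by
  refine ⟨pathList_head? w n, pathList_getLast? w n, pathList_nodup w n hinj, ?_⟩
  intro i hi
  rw [pathList_length] at hi
  rw [pathList_getD w n i (by omega), pathList_getD w n (i+1) (by omega)]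
  exact hadj i (by omega)

/-- Destructor for `AltPath` into a vertex function. -/
theorem altPath_fn (g : MatchedGraph V) {p : List V} {b v : V} (h : g.AltPath p b v) :
    ∃ n : ℕ, p.length - 1 = n ∧ p.getD 0 b = b ∧ p.getD n b = v ∧
      (∀ a ≤ n, ∀ c ≤ n, p.getD a b = p.getD c b → a = c) ∧
      ∀ k < n, g.adj (p.getD k b) (p.getD (k+1) b) ∧
        (g.M (p.getD k b) (p.getD (k+1) b) ↔ k % 2 = 1) := by
  obtain ⟨h1, h2, h3, h4⟩ := h
  have hne : p ≠ [] := by intro he; rw [he] at h1; simp at h1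
  have hlen : 1 ≤ p.length := by
    cases p with
    | nil => simp at hne
    | cons a t => simp
  refine ⟨p.length - 1, rfl, ?_, ?_, ?_, ?_⟩
  · cases p with
    | nil => simp at hne
    | cons a t => simp at h1; simp [h1]
  · rw [List.getLast?_eq_getLast hne] at h2
    rw [List.getD_eq_getElem _ _ (by omega), ← List.getLast_eq_getElem]
    simpa using h2
  · intro a ha c hc hac
    rw [List.getD_eq_getElem _ _ (by omega), List.getD_eq_getElem _ _ (by omega)] at hac
    exact (List.Nodup.getElem_inj_iff h3).mp hac
  · intro k hk
    exact h4 k (by omega)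

/-- Splice with reversed prefix: used in the parity-mismatch case. -/
theorem altPath_revSplice (g : MatchedGraph V) (w w' : ℕ → V) (n n' i j : ℕ)
    (hinj : ∀ a ≤ n, ∀ b ≤ n, w a = w b → a = b)
    (hinj' : ∀ a ≤ n', ∀ b ≤ n', w' a = w' b → a = b)
    (hadj : ∀ k < n, g.adj (w k) (w (k+1)) ∧ (g.M (w k) (w (k+1)) ↔ k % 2 = 1))
    (hadj' : ∀ k < n', g.adj (w' k) (w' (k+1)) ∧ (g.M (w' k) (w' (k+1)) ↔ k % 2 = 1))
    (hi : i ≤ n) (hj : j ≤ n') (heq : w i = w' j)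
    (hmin : ∀ k < i, ∀ l ≤ n', w' l ≠ w k)
    (hpar : (i + j) % 2 = 1) (b c : V) (hb : w 0 = b) (hc : w' 0 = c) :
    g.AltPath (pathList (fun k => if k ≤ i then w k else w' (i + j - k)) (i + j))
      b c := by
  set wA : ℕ → V := fun k => if k ≤ i then w k else w' (i + j - k) with hwA
  have hA : ∀ k, i ≤ k → wA k = w' (i + j - k) := by
    intro k hk
    rcases Nat.eq_or_lt_of_le hk with h | h
    · simp only [hwA, ← h, le_refl, if_pos]
      rw [heq]
      congr 1
      omega
    · simp only [hwA]
      rw [if_neg (by omega)]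
  have h0 : wA 0 = w 0 := by simp [hwA]
  have hN : wA (i + j) = w' 0 := by
    rw [hA (i+j) (by omega)]
    congr 1
    omega
  have := altPath_pathList g wA (i + j) ?_ ?_
  · rwa [h0, hN, hb, hc] at this
  · -- injectivity
    intro a ha c hc hac
    rcases le_or_gt a i with ha1 | ha1 <;> rcases le_or_gt c i with hc1 | hc1
    · simp only [hwA, if_pos ha1, if_pos hc1] at hac
      exact hinj a (by omega) c (by omega) hac
    · rw [show wA a = w a by simp [hwA, if_pos ha1], hA c (by omega)] at hac
      have hcl : i + j - c ≤ n' := by omega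
      rcases Nat.eq_or_lt_of_le ha1 with h | h
      · rw [← h] at heq
        have := hinj' j hj (i + j - c) hcl (heq.symm.trans hac)
        omega
      · exact absurd hac.symm (hmin a h (i + j - c) hcl)
    · rw [show wA c = w c by simp [hwA, if_pos hc1], hA a (by omega)] at hac
      have hal : i + j - a ≤ n' := by omega
      rcases Nat.eq_or_lt_of_le hc1 with h | h
      · rw [← h] at heq
        have := hinj' j hj (i + j - a) hal (heq.symm.trans hac.symm)
        omega
      · exact absurd hac (hmin c h (i + j - a) hal)
    · rw [hA a (by omega), hA c (by omega)] at hac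
      have := hinj' (i + j - a) (by omega) (i + j - c) (by omega) hac
      omega
  · -- adjacency / matching
    intro k hk
    rcases le_or_gt (k + 1) i with h1 | h1
    · have e1 : wA k = w k := by
        simp only [hwA]; rw [if_pos (Nat.le_of_succ_le h1)]
      have e2 : wA (k+1) = w (k+1) := by simp only [hwA]; rw [if_pos h1]
      rw [e1, e2]
      exact hadj k (by omega)
    · have hki : i ≤ k := by omega
      rw [hA k hki, hA (k+1) (by omega)]
      set l : ℕ := i + j - (k + 1) with hl
      have hl1 : i + j - k = l + 1 := by omega
      have hln : l < n' := by omega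
      rw [hl1]
      obtain ⟨ha, hm⟩ := hadj' l hln
      refine ⟨g.symm _ _ ha, ?_⟩
      have : g.M (w' (l+1)) (w' l) ↔ g.M (w' l) (w' (l+1)) :=
        ⟨g.M_symm _ _, g.M_symm _ _⟩
      rw [this, hm]
      omega

/-- Forward splice: used in the parity-match case. -/
theorem altPath_splice (g : MatchedGraph V) (w w' : ℕ → V) (n n' i j : ℕ)
    (hinj : ∀ a ≤ n, ∀ b ≤ n, w a = w b → a = b)
    (hinj' : ∀ a ≤ n', ∀ b ≤ n', w' a = w' b → a = b)
    (hadj : ∀ k < n, g.adj (w k) (w (k+1)) ∧ (g.M (w k) (w (k+1)) ↔ k % 2 = 1))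
    (hadj' : ∀ k < n', g.adj (w' k) (w' (k+1)) ∧ (g.M (w' k) (w' (k+1)) ↔ k % 2 = 1))
    (hi : i ≤ n) (hj : j ≤ n') (heq : w i = w' j)
    (hmin : ∀ k < i, ∀ l ≤ n', w' l ≠ w k)
    (hpar : (i + j) % 2 = 0) (b c : V) (hb : w 0 = b) (hc : w' n' = c) :
    g.AltPath (pathList (fun k => if k ≤ i then w k else w' (k - i + j)) (i + (n' - j)))
      b c := by
  set wB : ℕ → V := fun k => if k ≤ i then w k else w' (k - i + j) with hwB
  have hB : ∀ k, i ≤ k → wB k = w' (k - i + j) := by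
    intro k hk
    rcases Nat.eq_or_lt_of_le hk with h | h
    · simp only [hwB, ← h, le_refl, if_pos]
      rw [heq]
      congr 1
      omega
    · simp only [hwB]
      rw [if_neg (by omega)]
  have h0 : wB 0 = w 0 := by simp [hwB]
  have hN : wB (i + (n' - j)) = w' n' := by
    rw [hB _ (by omega)]
    congr 1
    omega
  have := altPath_pathList g wB (i + (n' - j)) ?_ ?_
  · rwa [h0, hN, hb, hc] at this
  · intro a ha c hc hac
    rcases le_or_gt a i with ha1 | ha1 <;> rcases le_or_gt c i with hc1 | hc1
    · simp only [hwB, if_pos ha1, if_pos hc1] at hac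
      exact hinj a (by omega) c (by omega) hac
    · rw [show wB a = w a by simp [hwB, if_pos ha1], hB c (by omega)] at hac
      have hcl : c - i + j ≤ n' := by omega
      rcases Nat.eq_or_lt_of_le ha1 with h | h
      · rw [← h] at heq
        have := hinj' j hj (c - i + j) hcl (heq.symm.trans hac)
        omega
      · exact absurd hac.symm (hmin a h (c - i + j) hcl)
    · rw [show wB c = w c by simp [hwB, if_pos hc1], hB a (by omega)] at hac
      have hal : a - i + j ≤ n' := by omega
      rcases Nat.eq_or_lt_of_le hc1 with h | h
      · rw [← h] at heq
        have := hinj' j hj (a - i + j) hal (heq.symm.trans hac.symm)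
        omega
      · exact absurd hac (hmin c h (a - i + j) hal)
    · rw [hB a (by omega), hB c (by omega)] at hac
      have := hinj' (a - i + j) (by omega) (c - i + j) (by omega) hac
      omega
  · intro k hk
    rcases le_or_gt (k + 1) i with h1 | h1
    · have e1 : wB k = w k := by
        simp only [hwB]; rw [if_pos (Nat.le_of_succ_le h1)]
      have e2 : wB (k+1) = w (k+1) := by simp only [hwB]; rw [if_pos h1]
      rw [e1, e2]
      exact hadj k (by omega)
    · have hki : i ≤ k := by omega
      rw [hB k hki, hB (k+1) (by omega)]
      set l : ℕ := k - i + j with hl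
      have hl1 : k + 1 - i + j = l + 1 := by omega
      have hln : l < n' := by omega
      rw [hl1]
      obtain ⟨ha, hm⟩ := hadj' l hln
      exact ⟨ha, by rw [hm]; omega⟩

end MatchedGraphAux

namespace MatchedGraphAux

universe v2
variable {V : Type v2}

theorem evenlevel_exists (g : MatchedGraph V) (v : V) (h : g.evenlevel v ≠ ⊤) :
    ∃ p f, g.IsEvenlevelPath p f v := by
  have hne : {n : ℕ∞ | ∃ p f, g.AltPathFrom p f v ∧ Even (p.length - 1) ∧
      n = ((p.length - 1 : ℕ) : ℕ∞)}.Nonempty := by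
    by_contra hcon
    rw [Set.not_nonempty_iff_eq_empty] at hcon
    exact h (by rw [MatchedGraph.evenlevel, hcon, sInf_empty])
  obtain ⟨p, f, h1, h2, h3⟩ := csInf_mem hne
  exact ⟨p, f, h1, h2, by rw [MatchedGraph.evenlevel, ← h3]⟩

theorem oddlevel_exists (g : MatchedGraph V) (v : V) (h : g.oddlevel v ≠ ⊤) :
    ∃ p f, g.IsOddlevelPath p f v := by
  have hne : {n : ℕ∞ | ∃ p f, g.AltPathFrom p f v ∧ Odd (p.length - 1) ∧
      n = ((p.length - 1 : ℕ) : ℕ∞)}.Nonempty := by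
    by_contra hcon
    rw [Set.not_nonempty_iff_eq_empty] at hcon
    exact h (by rw [MatchedGraph.oddlevel, hcon, sInf_empty])
  obtain ⟨p, f, h1, h2, h3⟩ := csInf_mem hne
  exact ⟨p, f, h1, h2, by rw [MatchedGraph.oddlevel, ← h3]⟩

theorem oddlevel_le_of (g : MatchedGraph V) {v f : V} {p : List V}
    (h : g.AltPathFrom p f v) (ho : Odd (p.length - 1)) :
    g.oddlevel v ≤ ((p.length - 1 : ℕ) : ℕ∞) :=
  sInf_le ⟨p, f, h, ho, rfl⟩

theorem evenlevel_le_of (g : MatchedGraph V) {v f : V} {p : List V}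
    (h : g.AltPathFrom p f v) (ho : Even (p.length - 1)) :
    g.evenlevel v ≤ ((p.length - 1 : ℕ) : ℕ∞) :=
  sInf_le ⟨p, f, h, ho, rfl⟩

theorem lm_le_of (g : MatchedGraph V) {f v : V} {p : List V}
    (h : g.AltPathFrom p f v) (hv : g.unmatched v) (hne : f ≠ v) :
    g.lm ≤ ((p.length - 1 : ℕ) : ℕ∞) :=
  sInf_le ⟨p, f, v, h, hv, hne, rfl⟩

theorem crossing (g : MatchedGraph V) (v f₁ f₂ : V) (p q : List V)
    (hp : g.IsEvenlevelPath p f₁ v) (hq : g.IsOddlevelPath q f₂ v)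
    (h2 : g.tenacity v < g.lm) :
    (∃ r, g.IsOddlevelPath r f₁ v) ∧ (∃ r, g.IsEvenlevelPath r f₂ v) := by
  by_cases hfe : f₁ = f₂
  · subst hfe
    exact ⟨⟨q, hq⟩, ⟨p, hp⟩⟩
  obtain ⟨⟨hf₁, hap⟩, hpe, hpl⟩ := hp
  obtain ⟨⟨hf₂, haq⟩, hqo, hql⟩ := hq
  obtain ⟨e, hpe1, hw0, hwe, hwinj, hwadj⟩ := altPath_fn g hap
  obtain ⟨o, hqe1, hw0', hwo', hwinj', hwadj'⟩ := altPath_fn g haq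
  rw [hpe1] at hpe hpl
  rw [hqe1] at hqo hql
  rw [Nat.even_iff] at hpe
  rw [Nat.odd_iff] at hqo
  -- first crossing along p
  set S : Set ℕ := {k | k ≤ e ∧ ∃ l, l ≤ o ∧ q.getD l f₂ = p.getD k f₁} with hS
  have hSne : e ∈ S := ⟨le_refl _, o, le_refl _, by rw [hwo', hwe]⟩
  have hiS : sInf S ∈ S := Nat.sInf_mem ⟨e, hSne⟩
  set i := sInf S with hidef
  obtain ⟨hie, j, hjo, hij⟩ := hiS
  have himin : ∀ k < i, ∀ l ≤ o, q.getD l f₂ ≠ p.getD k f₁ := by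
    intro k hk l hl hco
    have hkS : k ∈ S := ⟨by omega, l, hl, hco⟩
    have := Nat.sInf_le hkS
    omega
  -- first crossing along q
  set S' : Set ℕ := {l | l ≤ o ∧ ∃ k, k ≤ e ∧ p.getD k f₁ = q.getD l f₂} with hS'
  have hS'ne : o ∈ S' := ⟨le_refl _, e, le_refl _, by rw [hwo', hwe]⟩
  have hjS' : sInf S' ∈ S' := Nat.sInf_mem ⟨o, hS'ne⟩
  set j' := sInf S' with hj'def
  obtain ⟨hj'o, i', hi'e, hi'j'⟩ := hjS'
  have hj'min : ∀ l < j', ∀ k ≤ e, p.getD k f₁ ≠ q.getD l f₂ := by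
    intro l hl k hk hco
    have hlS : l ∈ S' := ⟨by omega, k, hk, hco⟩
    have := Nat.sInf_le hlS
    omega
  have hij' : j' ≤ j := Nat.sInf_le ⟨hjo, i, hie, hij.symm⟩
  have hii' : i ≤ i' := Nat.sInf_le ⟨hi'e, j', hj'o, hi'j'.symm⟩
  -- parity mismatch on the p-side crossing gives a too-short augmenting path
  rcases Nat.mod_two_eq_zero_or_one (i + j) with hpar | hpar
  swap
  · exfalso
    have hpath := altPath_revSplice g (fun k => p.getD k f₁) (fun l => q.getD l f₂)
      e o i j hwinj hwinj' hwadj hwadj' hie hjo hij.symm himin hpar f₁ f₂ hw0 hw0'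
    have hlm := lm_le_of g ⟨hf₁, hpath⟩ hf₂ hfe
    rw [pathList_length] at hlm
    simp only [Nat.add_sub_cancel] at hlm
    have hle : ((i + j : ℕ) : ℕ∞) ≤ g.tenacity v := by
      rw [MatchedGraph.tenacity, ← hpl, ← hql, ← Nat.cast_add]
      exact_mod_cast (by omega : i + j ≤ e + o)
    exact absurd (h2.trans_le (hlm.trans hle)) (lt_irrefl _)
  rcases Nat.mod_two_eq_zero_or_one (j' + i') with hpar' | hpar'
  swap
  · exfalso
    have hpath := altPath_revSplice g (fun l => q.getD l f₂) (fun k => p.getD k f₁)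
      o e j' i' hwinj' hwinj hwadj' hwadj hj'o hi'e hi'j'.symm hj'min hpar' f₂ f₁ hw0' hw0
    have hlm := lm_le_of g ⟨hf₂, hpath⟩ hf₁ (Ne.symm hfe)
    rw [pathList_length] at hlm
    simp only [Nat.add_sub_cancel] at hlm
    have hle : ((j' + i' : ℕ) : ℕ∞) ≤ g.tenacity v := by
      rw [MatchedGraph.tenacity, ← hpl, ← hql, ← Nat.cast_add]
      exact_mod_cast (by omega : j' + i' ≤ e + o)
    exact absurd (h2.trans_le (hlm.trans hle)) (lt_irrefl _)
  -- both crossings are parity-matched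
  have hpathA := altPath_splice g (fun k => p.getD k f₁) (fun l => q.getD l f₂)
    e o i j hwinj hwinj' hwadj hwadj' hie hjo hij.symm himin hpar f₁ v hw0 hwo'
  have hpathB := altPath_splice g (fun l => q.getD l f₂) (fun k => p.getD k f₁)
    o e j' i' hwinj' hwinj hwadj' hwadj hj'o hi'e hi'j'.symm hj'min hpar' f₂ v hw0' hwe
  have hlenA := pathList_len_sub (fun k => if k ≤ i then (fun k => p.getD k f₁) k
      else (fun l => q.getD l f₂) (k - i + j)) (i + (o - j))
  have hlenB := pathList_len_sub (fun k => if k ≤ j' then (fun l => q.getD l f₂) k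
      else (fun k => p.getD k f₁) (k - j' + i')) (j' + (e - i'))
  have hoA := oddlevel_le_of g ⟨hf₁, hpathA⟩
    (by rw [hlenA, Nat.odd_iff]; omega)
  have heB := evenlevel_le_of g ⟨hf₂, hpathB⟩
    (by rw [hlenB, Nat.even_iff]; omega)
  rw [hlenA, ← hql] at hoA
  rw [hlenB, ← hpl] at heB
  have hoA' : o ≤ i + (o - j) := by exact_mod_cast hoA
  have heB' : e ≤ j' + (e - i') := by exact_mod_cast heB
  have hji : j = i ∧ i' = j' := by omega
  constructor
  · refine ⟨_, ⟨hf₁, hpathA⟩, ?_, ?_⟩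
    · rw [hlenA, Nat.odd_iff]
      omega
    · rw [hlenA, ← hql]
      congr 1
      omega
  · refine ⟨_, ⟨hf₂, hpathB⟩, ?_, ?_⟩
    · rw [hlenB, Nat.even_iff]
      omega
    · rw [hlenB, ← hpl]
      congr 1
      omega

end MatchedGraphAux


/-- For a vertex `v` of eligible tenacity (`t_m ≤ tenacity(v) < l_m`)
and an unmatched vertex `f`, there is an `evenlevel(v)` path starting at `f` iff
there is an `oddlevel(v)` path starting at `f`. -/
theorem exists_evenlevelPath_iff_exists_oddlevelPath (g : MatchedGraph V)
    (v f : V) (hf : g.unmatched f)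
    (h1 : g.tm ≤ g.tenacity v) (h2 : g.tenacity v < g.lm) :
    (∃ p, g.IsEvenlevelPath p f v) ↔ (∃ p, g.IsOddlevelPath p f v) := by
  have htop : g.tenacity v ≠ ⊤ := fun h => absurd (h ▸ h2) not_top_lt
  have hev : g.evenlevel v ≠ ⊤ := fun h => htop (by rw [MatchedGraph.tenacity, h, top_add])
  have hod : g.oddlevel v ≠ ⊤ := fun h => htop (by rw [MatchedGraph.tenacity, h, add_top])
  constructor
  · rintro ⟨p, hp⟩
    obtain ⟨q, f₂, hq⟩ := MatchedGraphAux.oddlevel_exists g v hod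
    exact (MatchedGraphAux.crossing g v f f₂ p q hp hq h2).1
  · rintro ⟨q, hq⟩
    obtain ⟨p, f₁, hp⟩ := MatchedGraphAux.evenlevel_exists g v hev
    exact (MatchedGraphAux.crossing g v f₁ f p q hp hq h2).2
end

section
/- Let (u, v) be a matched edge of eligible tenacity (t_m <= tenacity(u,v) < l_m) and let f be an unmatched vertex. Then u has both an evenlevel(u) path and an oddlevel(u) path starting at f if and only if v has both an evenlevel(v) path and an oddlevel(v) path starting at f. -/
open scoped Classical

universe u

variable {V : Type u}

namespace MatchedGraph

-- AUX START
lemma aux_ne_nil (g : MatchedGraph V) {p : List V} {f v : V}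
    (h : g.AltPath p f v) : p ≠ [] := by
  rintro rfl; simpa using h.1

lemma aux_first (g : MatchedGraph V) {p : List V} {f v : V}
    (h : g.AltPath p f v) : p.getD 0 f = f := by
  have hne := g.aux_ne_nil h
  have h1 := (List.head?_eq_head hne).symm.trans h.1
  rw [List.getD_eq_getElem p f (List.length_pos_iff.2 hne), ← List.head_eq_getElem]
  exact Option.some.inj h1
  exact hne

lemma aux_last (g : MatchedGraph V) {p : List V} {f v : V}
    (h : g.AltPath p f v) : p.getD (p.length - 1) f = v := by
  have hne := g.aux_ne_nil h
  have h1 := (List.getLast?_eq_getLast hne).symm.trans h.2.1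
  rw [List.getD_eq_getElem p f (by have := List.length_pos_iff.2 hne; omega),
    ← List.getLast_eq_getElem]
  exact Option.some.inj h1
  exact hne

/-- A matched vertex `u` cannot lie on an odd alternating path to its partner `v`. -/
lemma matched_not_mem_odd (g : MatchedGraph V) {u v f : V} {q : List V}
    (hm : g.M u v) (hfq : g.AltPathFrom q f v) (hodd : Odd (q.length - 1)) :
    u ∉ q := by
  obtain ⟨hf, hq⟩ := hfq
  obtain ⟨hhead, hlast, hnodup, hedge⟩ := hq
  intro hu
  have hne : q ≠ [] := g.aux_ne_nil ⟨hhead, hlast, hnodup, hedge⟩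
  have hlen0 : 0 < q.length := List.length_pos_iff.2 hne
  have hmod : (q.length - 1) % 2 = 1 := Nat.odd_iff.1 hodd
  obtain ⟨i, hi, hqi⟩ := List.mem_iff_getElem.1 hu
  have h0 : q.getD 0 f = f := g.aux_first ⟨hhead, hlast, hnodup, hedge⟩
  have hl : q.getD (q.length - 1) f = v := g.aux_last ⟨hhead, hlast, hnodup, hedge⟩
  rw [List.getD_eq_getElem q f hlen0] at h0
  rw [List.getD_eq_getElem q f (by omega)] at hl
  have huf : u ≠ f := by rintro rfl; exact hf v hm
  have huv : u ≠ v := by rintro rfl; exact g.loopless u (g.M_sub u u hm)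
  have hi0 : i ≠ 0 := by rintro rfl; exact huf (hqi ▸ h0)
  have hil : i ≠ q.length - 1 := by rintro rfl; exact huv (by rw [hqi] at hl; exact hl)
  rcases Nat.even_or_odd i with hpar | hpar
  · -- i even, i ≥ 2 : edge (i-1, i) is matched, forcing q[i-1] = v
    have hie : i % 2 = 0 := Nat.even_iff.1 hpar
    obtain ⟨j, rfl⟩ : ∃ j, i = j + 1 := ⟨i - 1, by omega⟩
    have hjlt : j + 1 < q.length := hi
    have hedge' := hedge j hjlt
    rw [List.getD_eq_getElem q f (by omega), List.getD_eq_getElem q f hjlt] at hedge'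
    have hMj : g.M q[j] u := hqi ▸ hedge'.2.mpr (by omega)
    have hv : v = q[j]'(by omega) := g.M_matching u v _ hm (g.M_symm _ _ hMj)
    have : j = q.length - 1 := by
      have := (hnodup.getElem_inj_iff).1 (hv ▸ hl)
      omega
    omega
  · -- i odd : edge (i, i+1) is matched, forcing q[i+1] = v, i = len - 2 even
    have hio : i % 2 = 1 := Nat.odd_iff.1 hpar
    have hi1 : i + 1 < q.length := by omega
    have hedge' := hedge i hi1
    rw [List.getD_eq_getElem q f hi, List.getD_eq_getElem q f hi1] at hedge'
    have hMi : g.M u (q[i + 1]'hi1) := hqi ▸ hedge'.2.mpr hio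
    have hv : v = q[i + 1]'hi1 := g.M_matching u v _ hm hMi
    have : i + 1 = q.length - 1 := by
      have := (hnodup.getElem_inj_iff).1 (hv ▸ hl)
      omega
    omega

/-- Extend an odd path to `v` by the matched edge to get an even path to `u`. -/
lemma extend_path (g : MatchedGraph V) {u v f : V} {q : List V}
    (hm : g.M u v) (hfq : g.AltPathFrom q f v) (hodd : Odd (q.length - 1)) :
    g.AltPathFrom (q ++ [u]) f u ∧ Even ((q ++ [u]).length - 1) ∧
      (q ++ [u]).length - 1 = q.length := by
  have hnm : u ∉ q := g.matched_not_mem_odd hm hfq hodd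
  obtain ⟨hf, hq⟩ := hfq
  obtain ⟨hhead, hlast, hnodup, hedge⟩ := hq
  have hne : q ≠ [] := g.aux_ne_nil ⟨hhead, hlast, hnodup, hedge⟩
  have hlen0 : 0 < q.length := List.length_pos_iff.2 hne
  have hmod : (q.length - 1) % 2 = 1 := Nat.odd_iff.1 hodd
  have hl : q.getD (q.length - 1) f = v := g.aux_last ⟨hhead, hlast, hnodup, hedge⟩
  have hlenapp : (q ++ [u]).length = q.length + 1 := by simp
  refine ⟨⟨hf, ?_, ?_, ?_, ?_⟩, ?_, by omega⟩
  · rw [List.head?_append_of_ne_nil _ hne]; exact hhead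
  · simp
  · simp [List.nodup_append, hnodup, hnm]; rintro a ha rfl; exact hnm ha
  · intro i hi
    rw [hlenapp] at hi
    have hgetq : ∀ k (hk : k < q.length), (q ++ [u]).getD k f = q.getD k f := by
      intro k hk
      rw [List.getD_eq_getElem _ f (by rw [hlenapp]; omega),
        List.getD_eq_getElem q f hk]
      exact List.getElem_append_left hk
    rcases lt_or_eq_of_le (Nat.lt_succ_iff.1 hi) with hlt | heq
    · rw [hgetq i (by omega), hgetq (i + 1) hlt]
      exact hedge i hlt
    · -- last edge: (v, u), matched, index i = q.length - 1 odd
      have hgu : (q ++ [u]).getD (i + 1) f = u := by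
        have h' : (q ++ [u]).getD (i + 1) f = (q ++ [u]).getD q.length f := by rw [heq]
        rw [h', List.getD_eq_getElem _ f (by omega)]
        simp
      have hgv : (q ++ [u]).getD i f = v := by
        rw [hgetq i (by omega)]
        have : i = q.length - 1 := by omega
        rw [this]; exact hl
      rw [hgu, hgv]
      exact ⟨g.M_sub _ _ (g.M_symm _ _ hm),
        iff_of_true (g.M_symm _ _ hm) (by omega)⟩
  · rw [hlenapp]
    exact Nat.even_iff.2 (by omega)

/-- An even path to the matched vertex `u` ends with the matched edge `(v, u)`;
dropping `u` gives an odd path to `v`. -/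
lemma shrink_path (g : MatchedGraph V) {u v f : V} {p : List V}
    (hm : g.M u v) (hfp : g.AltPathFrom p f u) (heven : Even (p.length - 1)) :
    g.AltPathFrom p.dropLast f v ∧ Odd (p.dropLast.length - 1) ∧
      p.dropLast.length = p.length - 1 ∧ 3 ≤ p.length := by
  obtain ⟨hf, hp⟩ := hfp
  obtain ⟨hhead, hlast, hnodup, hedge⟩ := hp
  have hne : p ≠ [] := g.aux_ne_nil ⟨hhead, hlast, hnodup, hedge⟩
  have hlen0 : 0 < p.length := List.length_pos_iff.2 hne
  have h0 : p.getD 0 f = f := g.aux_first ⟨hhead, hlast, hnodup, hedge⟩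
  have hl : p.getD (p.length - 1) f = u := g.aux_last ⟨hhead, hlast, hnodup, hedge⟩
  have huf : u ≠ f := by rintro rfl; exact hf v hm
  have hlen2 : 2 ≤ p.length := by
    by_contra h
    have h1 : p.length - 1 = 0 := by omega
    rw [h1] at hl
    exact huf (hl.symm.trans h0)
  have hmod : (p.length - 1) % 2 = 0 := Nat.even_iff.1 heven
  have hlen3 : 3 ≤ p.length := by omega
  -- last edge is matched, so p[len-2] = v
  have hedge' := hedge (p.length - 2) (by omega)
  have he2 : p.length - 2 + 1 = p.length - 1 := by omega
  rw [he2] at hedge'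
  have hMl : g.M (p.getD (p.length - 2) f) u := hl ▸ hedge'.2.mpr (by omega)
  have hv : p.getD (p.length - 2) f = v :=
    (g.M_matching u v _ hm (g.M_symm _ _ hMl)).symm
  have hdl : p.dropLast.length = p.length - 1 := by simp
  have hdne : p.dropLast ≠ [] := by
    intro h; rw [← List.length_eq_zero_iff] at h; omega
  have hgd : ∀ k (hk : k < p.length - 1), p.dropLast.getD k f = p.getD k f := by
    intro k hk
    rw [List.getD_eq_getElem _ f (by omega), List.getD_eq_getElem p f (by omega)]
    exact List.getElem_dropLast _
  refine ⟨⟨hf, ?_, ?_, ?_, ?_⟩, ?_, hdl, hlen3⟩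
  · rw [List.head?_eq_head hdne, List.head_eq_getElem,
      ← List.getD_eq_getElem p.dropLast f (List.length_pos_iff.2 hdne)]
    rw [hgd 0 (by omega), h0]
  · rw [List.getLast?_eq_getLast hdne, List.getLast_eq_getElem,
      ← List.getD_eq_getElem p.dropLast f (by have := List.length_pos_iff.2 hdne; omega)]
    rw [hdl, hgd (p.length - 1 - 1) (by omega)]
    rw [show p.length - 1 - 1 = p.length - 2 by omega, hv]
  · exact (List.dropLast_sublist p).nodup hnodup
  · intro i hi
    rw [hdl] at hi
    rw [hgd i (by omega), hgd (i + 1) (by omega)]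
    exact hedge i (by omega)
  · rw [hdl]
    exact Nat.odd_iff.2 (by omega)

/-- Key transfer: `u` has an evenlevel path from `f` iff `v` has an oddlevel
path from `f`, for a matched edge `(u,v)`. -/
lemma even_u_iff_odd_v (g : MatchedGraph V) {u v f : V} (hm : g.M u v) :
    (∃ p, g.IsEvenlevelPath p f u) ↔ (∃ p, g.IsOddlevelPath p f v) := by
  constructor
  · rintro ⟨p, hfp, heven, hlvl⟩
    obtain ⟨halt, hodd, hqlen, hlen3⟩ := g.shrink_path hm hfp heven
    refine ⟨p.dropLast, halt, hodd, ?_⟩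
    have hle : g.oddlevel v ≤ ((p.dropLast.length - 1 : ℕ) : ℕ∞) :=
      sInf_le ⟨p.dropLast, f, halt, hodd, rfl⟩
    rcases hle.lt_or_eq with hlt | heq
    · exfalso
      rw [oddlevel] at hlt
      obtain ⟨n, ⟨r, f', hr, hrodd, rfl⟩, hnlt⟩ := sInf_lt_iff.1 hlt
      obtain ⟨hext, hextev, hextlen⟩ := g.extend_path hm hr hrodd
      have h1 : g.evenlevel u ≤ (((r ++ [u]).length - 1 : ℕ) : ℕ∞) :=
        sInf_le ⟨r ++ [u], f', hext, hextev, rfl⟩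
      rw [hextlen] at h1
      have hrlen : 2 ≤ r.length := by
        have := Nat.odd_iff.1 hrodd
        have : 0 < r.length := List.length_pos_iff.2 (g.aux_ne_nil hr.2)
        have := Nat.odd_iff.1 hrodd
        omega
      have hlt' : r.length - 1 < p.dropLast.length - 1 := by
        exact_mod_cast hnlt
      have h2 : ((r.length : ℕ) : ℕ∞) < ((p.length - 1 : ℕ) : ℕ∞) := by
        have : r.length < p.length - 1 := by omega
        exact_mod_cast this
      rw [hlvl] at h2
      exact absurd (h1.trans_lt h2) (lt_irrefl _)
    · exact heq.symm
  · rintro ⟨q, hfq, hodd, hlvl⟩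
    obtain ⟨hext, hextev, hextlen⟩ := g.extend_path hm hfq hodd
    refine ⟨q ++ [u], hext, hextev, ?_⟩
    have hle : g.evenlevel u ≤ (((q ++ [u]).length - 1 : ℕ) : ℕ∞) :=
      sInf_le ⟨q ++ [u], f, hext, hextev, rfl⟩
    rcases hle.lt_or_eq with hlt | heq
    · exfalso
      rw [evenlevel] at hlt
      obtain ⟨n, ⟨r, f', hr, hrev, rfl⟩, hnlt⟩ := sInf_lt_iff.1 hlt
      obtain ⟨hsh, hshodd, hshlen, hrlen3⟩ := g.shrink_path hm hr hrev
      have h1 : g.oddlevel v ≤ ((r.dropLast.length - 1 : ℕ) : ℕ∞) :=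
        sInf_le ⟨r.dropLast, f', hsh, hshodd, rfl⟩
      have hlt' : r.length - 1 < (q ++ [u]).length - 1 := by exact_mod_cast hnlt
      rw [hextlen] at hlt'
      have h2 : ((r.dropLast.length - 1 : ℕ) : ℕ∞) < ((q.length - 1 : ℕ) : ℕ∞) := by
        have : r.dropLast.length - 1 < q.length - 1 := by omega
        exact_mod_cast this
      rw [hlvl] at h2
      exact absurd (h1.trans_lt h2) (lt_irrefl _)
    · exact heq.symm

end MatchedGraph


/-- For a matched edge `(u, v)` of eligible tenacity and an
unmatched vertex `f`: `u` has both an `evenlevel(u)` and an `oddlevel(u)` path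
starting at `f` iff `v` has both an `evenlevel(v)` and an `oddlevel(v)` path
starting at `f`. -/
theorem mem_Vtf_iff_of_matched (g : MatchedGraph V) (u v f : V)
    (hm : g.M u v) (hf : g.unmatched f)
    (h1 : g.tm ≤ g.etenacity u v) (h2 : g.etenacity u v < g.lm) :
    ((∃ p, g.IsEvenlevelPath p f u) ∧ (∃ p, g.IsOddlevelPath p f u)) ↔
      ((∃ p, g.IsEvenlevelPath p f v) ∧ (∃ p, g.IsOddlevelPath p f v)) := by
  have hm' : g.M v u := g.M_symm u v hm
  constructor
  · rintro ⟨he, ho⟩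
    exact ⟨(g.even_u_iff_odd_v hm').mpr ho, (g.even_u_iff_odd_v hm).mp he⟩
  · rintro ⟨he, ho⟩
    exact ⟨(g.even_u_iff_odd_v hm).mpr ho, (g.even_u_iff_odd_v hm').mp he⟩
end
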